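/- arXiv:math/0105145 — 3 statements merged into one kernel-verified Lean document; each statement's English description precedes it below -/
import Mathlib

section
/- Let H be a finite index set and let D = (D_{ij})_{i,j∈H}, G = (G_{ij})_{i,j∈H} be complex matrices with det D ≠ 0. Then there exists a unique family (Q_i(w))_{i∈H} of power series in w with constant terms 1 satisfying the finite Q-system: ∏_{j∈H} (Q_j(w))^{D_{ij}} + w_i ∏_{j∈H} (Q_j(w))^{G_{ij}} = 1 for all i ∈ H. This solution is given by Q_i(w) = ∏_{j∈H} (Q'_j(w))^{(D^{-1})_{ij}}, where (Q'_i(w))_{i∈H} is the unique solution with unit constant terms of the standard Q-system Q'_i(w) + w_i ∏_{j∈H} (Q'_j(w))^{G'_{ij}} = 1 with G' = GD^{-1}. -/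
/-- The generalized binomial coefficient `binom(a,b) = (∏_{j=0}^{b-1} (a-j)) / b!`. -/
noncomputable def binomC (a : ℂ) (b : ℕ) : ℂ :=
  (∏ j ∈ Finset.range b, (a - (j : ℂ))) / (Nat.factorial b : ℂ)

/-- The `α`-th power `f^α = exp (α · log f)` of a multivariate formal power series with
constant term `1`, defined by the (coefficientwise finite) binomial expansion
`f ^ α = Σ_k binom(α,k) (f-1)^k`. -/
noncomputable def cpow {σ : Type*} (f : MvPowerSeries σ ℂ) (α : ℂ) : MvPowerSeries σ ℂ :=
  fun N => ∑ k ∈ Finset.range (N.sum (fun _ e => e) + 1),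
    binomC α k * MvPowerSeries.coeff N ((f - 1) ^ k)

namespace QAux
open MvPowerSeries Finset
set_option linter.unusedSectionVars false

variable {H : Type*} [Fintype H] [DecidableEq H]

/-- total degree (weight) of a monomial exponent -/
def wt {H : Type*} (N : H →₀ ℕ) : ℕ := N.sum fun _ e => e

lemma wt_zero : wt (0 : H →₀ ℕ) = 0 := Finsupp.sum_zero_index

lemma wt_add (a b : H →₀ ℕ) : wt (a + b) = wt a + wt b :=
  Finsupp.sum_add_index' (fun _ => rfl) (fun _ _ _ => rfl)

lemma eq_zero_of_wt_eq_zero {N : H →₀ ℕ} (h : wt N = 0) : N = 0 := by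
  ext a
  by_cases ha : a ∈ N.support
  · exact (Finset.sum_eq_zero_iff.mp h a ha)
  · simpa using Finsupp.notMem_support_iff.mp ha

lemma wt_single (i : H) : wt (Finsupp.single i 1) = 1 := by
  simp [wt, Finsupp.sum_single_index]

lemma coeff_cpow (f : MvPowerSeries H ℂ) (α : ℂ) (N : H →₀ ℕ) :
    MvPowerSeries.coeff N (cpow f α) =
      ∑ k ∈ Finset.range (wt N + 1), binomC α k * MvPowerSeries.coeff N ((f - 1) ^ k) := rfl

lemma coeff_pow_eq_zero {g : MvPowerSeries H ℂ} (hg : constantCoeff g = 0) :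
    ∀ (k : ℕ) (N : H →₀ ℕ), wt N < k → MvPowerSeries.coeff N (g ^ k) = 0 := by
  intro k
  induction k with
  | zero => intro N hN; omega
  | succ k ih =>
    intro N hN
    rw [pow_succ, MvPowerSeries.coeff_mul]
    apply Finset.sum_eq_zero
    intro p hp
    rw [Finset.HasAntidiagonal.mem_antidiagonal] at hp
    by_cases h2 : p.2 = 0
    · have : MvPowerSeries.coeff p.2 g = 0 := by
        rw [h2, coeff_zero_eq_constantCoeff_apply, hg]
      rw [this, mul_zero]
    · have hw : wt p.1 < k := by
        have := wt_add p.1 p.2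
        rw [hp] at this
        have h2' : 0 < wt p.2 := by
          rcases Nat.eq_zero_or_pos (wt p.2) with h | h
          · exact absurd (eq_zero_of_wt_eq_zero h) h2
          · exact h
        omega
      rw [ih p.1 hw, zero_mul]

lemma prod_range_natCast_sub (n k : ℕ) :
    (∏ j ∈ Finset.range k, ((n : ℂ) - (j : ℂ))) = (n.descFactorial k : ℂ) := by
  induction k with
  | zero => simp
  | succ k ih =>
    rw [Finset.prod_range_succ, ih, Nat.descFactorial_succ]
    rcases lt_trichotomy n k with h | h | h
    · rw [Nat.descFactorial_eq_zero_iff_lt.mpr h]; simp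
    · subst h; simp
    · rw [Nat.cast_mul, Nat.cast_sub (le_of_lt h)]; ring

lemma binomC_nat (n k : ℕ) : binomC (n : ℂ) k = (n.choose k : ℂ) := by
  rw [binomC, prod_range_natCast_sub, Nat.descFactorial_eq_factorial_mul_choose,
    Nat.cast_mul]
  have hk : (k.factorial : ℂ) ≠ 0 := Nat.cast_ne_zero.mpr (Nat.factorial_ne_zero k)
  rw [mul_comm, mul_div_assoc, div_self hk, mul_one]


/-- polynomial with `eval α = binomC α k` -/
noncomputable def pbinom (k : ℕ) : Polynomial ℂ :=
  Polynomial.C ((k.factorial : ℂ))⁻¹ * ∏ j ∈ Finset.range k, (Polynomial.X - Polynomial.C (j : ℂ))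

lemma eval_pbinom (k : ℕ) (α : ℂ) : (pbinom k).eval α = binomC α k := by
  simp [pbinom, binomC, Polynomial.eval_prod, div_eq_inv_mul]

/-- a family of power series whose coefficients are polynomial in the parameter -/
def PolyFam (F : ℂ → MvPowerSeries H ℂ) : Prop :=
  ∀ N : H →₀ ℕ, ∃ p : Polynomial ℂ, ∀ α, MvPowerSeries.coeff N (F α) = p.eval α

lemma polyFam_cpow (f : MvPowerSeries H ℂ) : PolyFam (fun α => cpow f α) := by
  intro N
  refine ⟨∑ k ∈ Finset.range (wt N + 1),
    Polynomial.C (MvPowerSeries.coeff N ((f - 1) ^ k)) * pbinom k, fun α => ?_⟩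
  rw [coeff_cpow, Polynomial.eval_finset_sum]
  exact Finset.sum_congr rfl fun k _ => by
    rw [Polynomial.eval_mul, Polynomial.eval_C, eval_pbinom, mul_comm]

lemma PolyFam.const (f : MvPowerSeries H ℂ) : PolyFam (fun _ => f) :=
  fun N => ⟨Polynomial.C (MvPowerSeries.coeff N f), fun α => by simp⟩

lemma PolyFam.mul {F G : ℂ → MvPowerSeries H ℂ} (hF : PolyFam F) (hG : PolyFam G) :
    PolyFam (fun α => F α * G α) := by
  intro N
  refine ⟨∑ q ∈ Finset.HasAntidiagonal.antidiagonal N, (hF q.1).choose * (hG q.2).choose, fun α => ?_⟩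
  rw [MvPowerSeries.coeff_mul, Polynomial.eval_finset_sum]
  exact Finset.sum_congr rfl fun q _ => by
    rw [Polynomial.eval_mul, (hF q.1).choose_spec α, (hG q.2).choose_spec α]

lemma PolyFam.of_eq {F G : ℂ → MvPowerSeries H ℂ} (hF : PolyFam F)
    (h : ∀ α, G α = F α) : PolyFam G :=
  fun N => ⟨(hF N).choose, fun α => by rw [h]; exact (hF N).choose_spec α⟩

lemma PolyFam.comp {F : ℂ → MvPowerSeries H ℂ} (hF : PolyFam F) (q : Polynomial ℂ) :
    PolyFam (fun α => F (q.eval α)) :=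
  fun N => ⟨(hF N).choose.comp q, fun α => by
    rw [Polynomial.eval_comp]; exact (hF N).choose_spec _⟩

lemma PolyFam.prod {ι : Type*} (s : Finset ι) (F : ι → ℂ → MvPowerSeries H ℂ)
    (h : ∀ i ∈ s, PolyFam (F i)) : PolyFam (fun α => ∏ i ∈ s, F i α) := by
  classical
  induction s using Finset.cons_induction with
  | empty => exact (PolyFam.const 1).of_eq (fun α => by simp)
  | cons a s' hx ih =>
    exact ((h a (Finset.mem_cons_self a s')).mul
      (ih fun i hi => h i (Finset.mem_cons_of_mem hi))).of_eq
      (fun α => by rw [Finset.prod_cons])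

/-- Two polynomial families agreeing at all naturals agree everywhere. -/
lemma eq_of_forall_nat {F G : ℂ → MvPowerSeries H ℂ} (hF : PolyFam F) (hG : PolyFam G)
    (h : ∀ n : ℕ, F (n : ℂ) = G (n : ℂ)) (α : ℂ) : F α = G α := by
  ext N
  obtain ⟨p, hp⟩ := hF N
  obtain ⟨q, hq⟩ := hG N
  rw [hp, hq]
  have hpq : p = q := by
    apply Polynomial.eq_of_infinite_eval_eq
    apply Set.Infinite.mono (s := Set.range (Nat.cast : ℕ → ℂ))
    · rintro _ ⟨n, rfl⟩
      show p.eval _ = q.eval _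
      rw [← hp, ← hq, h n]
    · exact Set.infinite_range_of_injective Nat.cast_injective
  rw [hpq]


lemma constantCoeff_cpow (f : MvPowerSeries H ℂ) (α : ℂ) :
    constantCoeff (cpow f α) = 1 := by
  rw [← coeff_zero_eq_constantCoeff_apply, coeff_cpow]
  rw [wt_zero]
  simp [binomC]

variable {f g : MvPowerSeries H ℂ}

lemma cpow_nat (hf : constantCoeff f = 1) (n : ℕ) : cpow f (n : ℂ) = f ^ n := by
  have hsub : constantCoeff (f - 1) = 0 := by simp [hf]
  have hbin : f ^ n = ∑ k ∈ Finset.range (n + 1), (n.choose k : ℂ) • (f - 1) ^ k := by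
    have h0 : f = (f - 1) + 1 := by ring
    calc f ^ n = ((f - 1) + 1) ^ n := by rw [← h0]
    _ = ∑ k ∈ Finset.range (n + 1), (f - 1) ^ k * 1 ^ (n - k) * (n.choose k : MvPowerSeries H ℂ) :=
        add_pow _ _ _
    _ = ∑ k ∈ Finset.range (n + 1), (n.choose k : ℂ) • (f - 1) ^ k := by
        apply Finset.sum_congr rfl
        intro k _
        rw [one_pow, mul_one, mul_comm, ← nsmul_eq_mul, ← Nat.cast_smul_eq_nsmul ℂ]
  ext N
  rw [coeff_cpow, hbin, map_sum]
  have key : ∀ k : ℕ, binomC (n : ℂ) k * MvPowerSeries.coeff N ((f - 1) ^ k) =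
      MvPowerSeries.coeff N ((n.choose k : ℂ) • (f - 1) ^ k) := by
    intro k
    rw [binomC_nat, map_smul, smul_eq_mul]
  rw [show (∑ k ∈ Finset.range (wt N + 1), binomC (n : ℂ) k * MvPowerSeries.coeff N ((f - 1) ^ k))
      = ∑ k ∈ Finset.range (wt N + 1), MvPowerSeries.coeff N ((n.choose k : ℂ) • (f - 1) ^ k) from
    Finset.sum_congr rfl fun k _ => key k]
  set T : ℕ → ℂ := fun k => MvPowerSeries.coeff N ((n.choose k : ℂ) • (f - 1) ^ k) with hT
  have e1 : (∑ k ∈ Finset.range (wt N + 1), T k) = ∑ k ∈ Finset.range (n + wt N + 1), T k := by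
    apply Finset.sum_subset (Finset.range_subset_range.mpr (by omega))
    intro k _ hk
    rw [Finset.mem_range, not_lt] at hk
    have h0 : MvPowerSeries.coeff N ((f - 1) ^ k) = 0 :=
      coeff_pow_eq_zero hsub k N (by omega)
    simp [hT, h0]
  have e2 : (∑ k ∈ Finset.range (n + 1), T k) = ∑ k ∈ Finset.range (n + wt N + 1), T k := by
    apply Finset.sum_subset (Finset.range_subset_range.mpr (by omega))
    intro k _ hk
    rw [Finset.mem_range, not_lt] at hk
    have h0 : n.choose k = 0 := Nat.choose_eq_zero_of_lt (by omega)
    simp [hT, h0]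
  rw [e1, ← e2]


lemma cpow_zero' (hf : constantCoeff f = 1) : cpow f 0 = 1 := by
  have := cpow_nat hf 0
  simpa using this

lemma cpow_one' (hf : constantCoeff f = 1) : cpow f 1 = f := by
  have := cpow_nat hf 1
  simpa using this

lemma cpow_add (hf : constantCoeff f = 1) (α β : ℂ) :
    cpow f (α + β) = cpow f α * cpow f β := by
  have h2 : ∀ n : ℕ, ∀ β : ℂ, cpow f ((n : ℂ) + β) = cpow f (n : ℂ) * cpow f β := by
    intro n
    apply eq_of_forall_nat (F := fun β => cpow f ((n : ℂ) + β))
      (G := fun β => cpow f (n : ℂ) * cpow f β)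
    · exact ((polyFam_cpow f).comp (Polynomial.C (n : ℂ) + Polynomial.X)).of_eq
        (fun β => by simp)
    · exact (PolyFam.const _).mul (polyFam_cpow f)
    · intro m
      rw [cpow_nat hf, cpow_nat hf, ← Nat.cast_add, cpow_nat hf, pow_add]
  revert α
  apply eq_of_forall_nat (F := fun α => cpow f (α + β)) (G := fun α => cpow f α * cpow f β)
  · exact ((polyFam_cpow f).comp (Polynomial.X + Polynomial.C β)).of_eq (fun α => by simp)
  · exact (polyFam_cpow f).mul (PolyFam.const _)
  · intro n; exact h2 n β

lemma cpow_natsmul (hf : constantCoeff f = 1) (α : ℂ) :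
    ∀ n : ℕ, cpow f ((n : ℂ) * α) = (cpow f α) ^ n := by
  intro n
  induction n with
  | zero => simpa using cpow_zero' hf
  | succ n ih =>
    rw [pow_succ, ← ih, Nat.cast_succ, add_mul, one_mul, cpow_add hf]

lemma cpow_cpow (hf : constantCoeff f = 1) (α β : ℂ) :
    cpow (cpow f α) β = cpow f (α * β) := by
  revert β
  apply eq_of_forall_nat (F := fun β => cpow (cpow f α) β) (G := fun β => cpow f (α * β))
  · exact polyFam_cpow _
  · exact ((polyFam_cpow f).comp (Polynomial.C α * Polynomial.X)).of_eq (fun β => by simp)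
  · intro n
    rw [cpow_nat (constantCoeff_cpow f α) n, mul_comm, cpow_natsmul hf α n]

lemma cpow_mul_base (hf : constantCoeff f = 1) (hg : constantCoeff g = 1) (α : ℂ) :
    cpow (f * g) α = cpow f α * cpow g α := by
  revert α
  apply eq_of_forall_nat (F := fun α => cpow (f * g) α)
    (G := fun α => cpow f α * cpow g α)
  · exact polyFam_cpow _
  · exact (polyFam_cpow f).mul (polyFam_cpow g)
  · intro n
    have hfg : constantCoeff (f * g) = 1 := by rw [map_mul, hf, hg, mul_one]
    rw [cpow_nat hfg, cpow_nat hf, cpow_nat hg, mul_pow]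

lemma cpow_prod {ι : Type*} (s : Finset ι) (F : ι → MvPowerSeries H ℂ)
    (hF : ∀ i ∈ s, constantCoeff (F i) = 1) (α : ℂ) :
    cpow (∏ i ∈ s, F i) α = ∏ i ∈ s, cpow (F i) α := by
  classical
  induction s using Finset.cons_induction with
  | empty =>
    simp only [Finset.prod_empty]
    exact eq_of_forall_nat (polyFam_cpow 1) (PolyFam.const 1)
      (fun n => by rw [cpow_nat (map_one _), one_pow]) α
  | cons a s' hx ih =>
    rw [Finset.prod_cons, Finset.prod_cons,
      cpow_mul_base (hF a (Finset.mem_cons_self a s'))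
        (by rw [map_prod]; exact Finset.prod_eq_one fun i hi => hF i (Finset.mem_cons_of_mem hi)),
      ih fun i hi => hF i (Finset.mem_cons_of_mem hi)]

lemma cpow_sum {ι : Type*} (hf : constantCoeff f = 1) (s : Finset ι) (c : ι → ℂ) :
    cpow f (∑ i ∈ s, c i) = ∏ i ∈ s, cpow f (c i) := by
  classical
  induction s using Finset.cons_induction with
  | empty => simpa using cpow_zero' hf
  | cons a s' hx ih =>
    rw [Finset.sum_cons, Finset.prod_cons, cpow_add hf, ih]


/-- agreement of coefficients below weight `n` -/
def ModN (n : ℕ) (f g : MvPowerSeries H ℂ) : Prop :=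
  ∀ M : H →₀ ℕ, wt M < n → MvPowerSeries.coeff M f = MvPowerSeries.coeff M g

lemma ModN.refl (n : ℕ) (f : MvPowerSeries H ℂ) : ModN n f f := fun _ _ => rfl

lemma ModN.symm {n : ℕ} {f g : MvPowerSeries H ℂ} (h : ModN n f g) : ModN n g f :=
  fun M hM => (h M hM).symm

lemma ModN.sub {n : ℕ} {f g f' g' : MvPowerSeries H ℂ} (h : ModN n f g) (h' : ModN n f' g') :
    ModN n (f - f') (g - g') := fun M hM => by
  rw [map_sub, map_sub, h M hM, h' M hM]

lemma ModN.mul {n : ℕ} {f g f' g' : MvPowerSeries H ℂ} (h : ModN n f g) (h' : ModN n f' g') :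
    ModN n (f * f') (g * g') := fun M hM => by
  rw [MvPowerSeries.coeff_mul, MvPowerSeries.coeff_mul]
  apply Finset.sum_congr rfl
  intro p hp
  rw [Finset.HasAntidiagonal.mem_antidiagonal] at hp
  have hw : wt p.1 + wt p.2 = wt M := by rw [← wt_add, hp]
  rw [h p.1 (by omega), h' p.2 (by omega)]

lemma ModN.pow {n : ℕ} {f g : MvPowerSeries H ℂ} (h : ModN n f g) (k : ℕ) :
    ModN n (f ^ k) (g ^ k) := by
  induction k with
  | zero => exact ModN.refl n 1
  | succ k ih => rw [pow_succ, pow_succ]; exact ih.mul h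

lemma ModN.cpow {n : ℕ} {f g : MvPowerSeries H ℂ} (h : ModN n f g) (α : ℂ) :
    ModN n (cpow f α) (cpow g α) := fun M hM => by
  rw [coeff_cpow, coeff_cpow]
  exact Finset.sum_congr rfl fun k _ => by
    rw [((h.sub (ModN.refl n 1)).pow k) M hM]

lemma ModN.prod {ι : Type*} {n : ℕ} (s : Finset ι) (F G : ι → MvPowerSeries H ℂ)
    (h : ∀ i ∈ s, ModN n (F i) (G i)) : ModN n (∏ i ∈ s, F i) (∏ i ∈ s, G i) := by
  classical
  induction s using Finset.cons_induction with
  | empty => simpa using ModN.refl n 1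
  | cons a s' hx ih =>
    rw [Finset.prod_cons, Finset.prod_cons]
    exact (h a (Finset.mem_cons_self a s')).mul
      (ih fun i hi => h i (Finset.mem_cons_of_mem hi))

lemma ModN.X_mul {n : ℕ} {f g : MvPowerSeries H ℂ} (i : H) (h : ModN n f g) :
    ModN (n + 1) (X i * f) (X i * g) := fun M hM => by
  rw [MvPowerSeries.coeff_mul, MvPowerSeries.coeff_mul]
  apply Finset.sum_congr rfl
  intro p hp
  rw [Finset.HasAntidiagonal.mem_antidiagonal] at hp
  by_cases h1 : p.1 = Finsupp.single i 1
  · have hw : wt p.1 + wt p.2 = wt M := by rw [← wt_add, hp]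
    rw [h1, wt_single] at hw
    rw [h p.2 (by omega)]
  · rw [MvPowerSeries.coeff_X, if_neg h1, zero_mul, zero_mul]

/-- iterative approximations to the standard Q-system solution -/
noncomputable def seq (G' : Matrix H H ℂ) : ℕ → H → MvPowerSeries H ℂ
  | 0 => fun _ => 1
  | n + 1 => fun i => 1 - X i * ∏ j, cpow (seq G' n j) (G' i j)

lemma seq_const (G' : Matrix H H ℂ) (n : ℕ) (i : H) :
    constantCoeff (seq G' n i) = 1 := by
  cases n with
  | zero => exact map_one _
  | succ n =>
    show constantCoeff (1 - X i * _) = 1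
    rw [map_sub, map_one, map_mul, constantCoeff_X, zero_mul, sub_zero]

lemma seq_mod (G' : Matrix H H ℂ) : ∀ n : ℕ, ∀ i : H,
    ModN (n + 1) (seq G' n i) (seq G' (n + 1) i) := by
  intro n
  induction n with
  | zero =>
    intro i M hM
    have : M = 0 := eq_zero_of_wt_eq_zero (by omega)
    subst this
    rw [coeff_zero_eq_constantCoeff_apply, coeff_zero_eq_constantCoeff_apply,
      seq_const, seq_const]
  | succ n ih =>
    intro i
    show ModN (n + 2) (1 - X i * _) (1 - X i * _)
    exact (ModN.refl _ 1).sub (ModN.X_mul i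
      (ModN.prod _ _ _ fun j _ => (ih j).cpow (G' i j)))

lemma seq_stable (G' : Matrix H H ℂ) (i : H) {M : H →₀ ℕ} {n m : ℕ}
    (h : wt M < n) (h' : n ≤ m) :
    MvPowerSeries.coeff M (seq G' n i) = MvPowerSeries.coeff M (seq G' m i) := by
  induction m, h' using Nat.le_induction with
  | base => rfl
  | succ m hm ih => rw [ih, seq_mod G' m i M (by omega)]

/-- the solution of the standard Q-system -/
noncomputable def Qstd (G' : Matrix H H ℂ) : H → MvPowerSeries H ℂ :=
  fun i N => seq G' (wt N + 1) i N

lemma coeff_Qstd (G' : Matrix H H ℂ) (i : H) (N : H →₀ ℕ) :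
    MvPowerSeries.coeff N (Qstd G' i) = MvPowerSeries.coeff N (seq G' (wt N + 1) i) := by
  rw [MvPowerSeries.coeff_apply, MvPowerSeries.coeff_apply]
  rfl

lemma Qstd_mod (G' : Matrix H H ℂ) (n : ℕ) (i : H) : ModN n (Qstd G' i) (seq G' n i) :=
  fun M hM => by
    rw [coeff_Qstd]
    exact seq_stable G' i (Nat.lt_succ_self _) (by omega)

lemma Qstd_const (G' : Matrix H H ℂ) (i : H) : constantCoeff (Qstd G' i) = 1 := by
  rw [← coeff_zero_eq_constantCoeff_apply, Qstd_mod G' 1 i 0 (by rw [wt_zero]; omega),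
    coeff_zero_eq_constantCoeff_apply, seq_const]

lemma Qstd_eq (G' : Matrix H H ℂ) (i : H) :
    Qstd G' i + X i * ∏ j, cpow (Qstd G' j) (G' i j) = 1 := by
  have key : Qstd G' i = 1 - X i * ∏ j, cpow (Qstd G' j) (G' i j) := by
    ext N
    set n := wt N with hn
    have h1 : MvPowerSeries.coeff N (Qstd G' i) =
        MvPowerSeries.coeff N (seq G' (n + 2) i) := Qstd_mod G' (n + 2) i N (by omega)
    have h2 : seq G' (n + 2) i = 1 - X i * ∏ j, cpow (seq G' (n + 1) j) (G' i j) := rfl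
    rw [h1, h2]
    exact ((ModN.refl (n + 2) 1).sub (ModN.X_mul i (ModN.prod _ _ _ fun j _ =>
      ((Qstd_mod G' (n + 1) j).symm).cpow (G' i j)))) N (by omega)
  rw [key]; ring

/-- uniqueness for the standard Q-system -/
lemma std_unique (G' : Matrix H H ℂ) (Q R : H → MvPowerSeries H ℂ)
    (hQ : ∀ i, Q i + X i * ∏ j, cpow (Q j) (G' i j) = 1)
    (hR : ∀ i, R i + X i * ∏ j, cpow (R j) (G' i j) = 1) :
    ∀ i, Q i = R i := by
  have key : ∀ n : ℕ, ∀ i, ModN n (Q i) (R i) := by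
    intro n
    induction n with
    | zero => intro i M hM; omega
    | succ n ih =>
      intro i
      have hQ' : Q i = 1 - X i * ∏ j, cpow (Q j) (G' i j) := by
        rw [← hQ i]; ring
      have hR' : R i = 1 - X i * ∏ j, cpow (R j) (G' i j) := by
        rw [← hR i]; ring
      rw [hQ', hR']
      exact (ModN.refl _ 1).sub (ModN.X_mul i (ModN.prod _ _ _ fun j _ =>
        (ih j).cpow (G' i j)))
  intro i
  ext N
  exact key (wt N + 1) i N (Nat.lt_succ_self _)


lemma prod_cpow_prod (R : H → MvPowerSeries H ℂ) (hR : ∀ j, constantCoeff (R j) = 1)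
    (A B : Matrix H H ℂ) (i : H) :
    ∏ j, cpow (∏ k, cpow (R k) (B j k)) (A i j) = ∏ k, cpow (R k) ((A * B) i k) := by
  have step1 : ∀ j, cpow (∏ k, cpow (R k) (B j k)) (A i j)
      = ∏ k, cpow (R k) (B j k * A i j) := by
    intro j
    rw [cpow_prod Finset.univ _ (fun k _ => constantCoeff_cpow _ _)]
    exact Finset.prod_congr rfl fun k _ => cpow_cpow (hR k) _ _
  calc ∏ j, cpow (∏ k, cpow (R k) (B j k)) (A i j)
      = ∏ j, ∏ k, cpow (R k) (B j k * A i j) := Finset.prod_congr rfl fun j _ => step1 j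
    _ = ∏ k, ∏ j, cpow (R k) (B j k * A i j) := Finset.prod_comm
    _ = ∏ k, cpow (R k) ((A * B) i k) := by
        apply Finset.prod_congr rfl
        intro k _
        rw [Matrix.mul_apply, cpow_sum (hR k)]
        exact Finset.prod_congr rfl fun j _ => by rw [mul_comm]

lemma prod_cpow_one (R : H → MvPowerSeries H ℂ) (hR : ∀ j, constantCoeff (R j) = 1)
    (i : H) : ∏ k, cpow (R k) ((1 : Matrix H H ℂ) i k) = R i := by
  rw [Finset.prod_eq_single i]
  · rw [Matrix.one_apply_eq, cpow_one' (hR i)]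
  · intro k _ hk
    rw [Matrix.one_apply_ne (Ne.symm hk), cpow_zero' (hR k)]
  · intro h; exact absurd (Finset.mem_univ i) h

end QAux

open QAux MvPowerSeries

/-- For a finite index set `H` and complex matrices `D, G` with
`det D ≠ 0`, the finite `Q`-system `∏_j Q_j^{D_{ij}} + w_i ∏_j Q_j^{G_{ij}} = 1` has a
unique solution among families of power series with unit constant terms, and it is given by
`Q_i = ∏_j (Q'_j)^{(D⁻¹)_{ij}}` in terms of the unique solution `Q'` of the standard
`Q`-system with matrix `G' = G D⁻¹`. -/
theorem statement1 {H : Type*} [Fintype H] [DecidableEq H]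
    (D G : Matrix H H ℂ) (hD : D.det ≠ 0) :
    (∃! Q : H → MvPowerSeries H ℂ,
      (∀ i, MvPowerSeries.constantCoeff (Q i) = 1) ∧
      (∀ i, (∏ j, cpow (Q j) (D i j)) +
        MvPowerSeries.X i * ∏ j, cpow (Q j) (G i j) = 1)) ∧
    (∀ Q' : H → MvPowerSeries H ℂ,
      (∀ i, MvPowerSeries.constantCoeff (Q' i) = 1) →
      (∀ i, Q' i + MvPowerSeries.X i * ∏ j, cpow (Q' j) ((G * D⁻¹) i j) = 1) →
      ∀ Q : H → MvPowerSeries H ℂ,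
        (∀ i, MvPowerSeries.constantCoeff (Q i) = 1) →
        (∀ i, (∏ j, cpow (Q j) (D i j)) +
          MvPowerSeries.X i * ∏ j, cpow (Q j) (G i j) = 1) →
        ∀ i, Q i = ∏ j, cpow (Q' j) (D⁻¹ i j)) := by
  classical
  have hDu : IsUnit D.det := isUnit_iff_ne_zero.mpr hD
  have hDinv : D⁻¹ * D = 1 := Matrix.nonsing_inv_mul D hDu
  have hDinv' : D * D⁻¹ = 1 := Matrix.mul_nonsing_inv D hDu
  set G' : Matrix H H ℂ := G * D⁻¹ with hG'
  have hGmat : G' * D = G := by rw [hG', Matrix.mul_assoc, hDinv, Matrix.mul_one]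
  have main2 : ∀ Q' : H → MvPowerSeries H ℂ,
      (∀ i, MvPowerSeries.constantCoeff (Q' i) = 1) →
      (∀ i, Q' i + MvPowerSeries.X i * ∏ j, cpow (Q' j) (G' i j) = 1) →
      ∀ Q : H → MvPowerSeries H ℂ,
        (∀ i, MvPowerSeries.constantCoeff (Q i) = 1) →
        (∀ i, (∏ j, cpow (Q j) (D i j)) +
          MvPowerSeries.X i * ∏ j, cpow (Q j) (G i j) = 1) →
        ∀ i, Q i = ∏ j, cpow (Q' j) (D⁻¹ i j) := by
    intro Q' hQ'c hQ'e Q hQc hQe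
    set Q'' : H → MvPowerSeries H ℂ := fun i => ∏ j, cpow (Q j) (D i j) with hQ''
    have hGQ : ∀ i, (∏ j, cpow (Q'' j) (G' i j)) = ∏ j, cpow (Q j) (G i j) := by
      intro i
      rw [show (∏ j, cpow (Q'' j) (G' i j)) = ∏ k, cpow (Q k) ((G' * D) i k) from
        prod_cpow_prod Q hQc G' D i, hGmat]
    have hQ''e : ∀ i, Q'' i + MvPowerSeries.X i * ∏ j, cpow (Q'' j) (G' i j) = 1 := by
      intro i
      rw [hGQ i]
      exact hQe i
    have huniq : ∀ i, Q' i = Q'' i := std_unique G' Q' Q'' hQ'e hQ''e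
    intro i
    have : (∏ j, cpow (Q' j) (D⁻¹ i j)) = ∏ j, cpow (Q'' j) (D⁻¹ i j) :=
      Finset.prod_congr rfl fun j _ => by rw [huniq j]
    rw [this, show (∏ j, cpow (Q'' j) (D⁻¹ i j)) = ∏ k, cpow (Q k) ((D⁻¹ * D) i k) from
      prod_cpow_prod Q hQc D⁻¹ D i, hDinv, prod_cpow_one Q hQc i]
  refine ⟨?_, main2⟩
  set Q₀ : H → MvPowerSeries H ℂ := fun i => ∏ j, cpow (Qstd G' j) (D⁻¹ i j) with hQ₀
  have hQ₀c : ∀ i, MvPowerSeries.constantCoeff (Q₀ i) = 1 := by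
    intro i
    rw [hQ₀, map_prod]
    exact Finset.prod_eq_one fun j _ => constantCoeff_cpow _ _
  have hQ₀e : ∀ i, (∏ j, cpow (Q₀ j) (D i j)) +
      MvPowerSeries.X i * ∏ j, cpow (Q₀ j) (G i j) = 1 := by
    intro i
    have h1 : (∏ j, cpow (Q₀ j) (D i j)) = Qstd G' i := by
      rw [show (∏ j, cpow (Q₀ j) (D i j)) = ∏ k, cpow (Qstd G' k) ((D * D⁻¹) i k) from
        prod_cpow_prod (Qstd G') (Qstd_const G') D D⁻¹ i, hDinv',
        prod_cpow_one (Qstd G') (Qstd_const G') i]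
    have h2 : (∏ j, cpow (Q₀ j) (G i j)) = ∏ k, cpow (Qstd G' k) (G' i k) := by
      rw [show (∏ j, cpow (Q₀ j) (G i j)) = ∏ k, cpow (Qstd G' k) ((G * D⁻¹) i k) from
        prod_cpow_prod (Qstd G') (Qstd_const G') G D⁻¹ i, ← hG']
    rw [h1, h2]
    exact Qstd_eq G' i
  refine ⟨Q₀, ⟨hQ₀c, hQ₀e⟩, ?_⟩
  rintro Q1 ⟨h1c, h1e⟩
  funext i
  exact main2 (Qstd G') (Qstd_const G') (fun i => Qstd_eq G' i) Q1 h1c h1e i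
end

section
/- Let H be a finite index set, D, G complex matrices of size |H| with det D ≠ 0, and let (Q_i(w))_{i∈H} be the unique solution of the Q-system ∏_{j∈H} Q_j(w)^{D_{ij}} + w_i ∏_{j∈H} Q_j(w)^{G_{ij}} = 1. For ν ∈ ℂ^H set Q^ν_{D,G}(w) = ∏_{i∈H} (Q_i(w))^{ν_i}. Then Q^ν_{D,G}(w) · K^0_{D,G}(w) = K^ν_{D,G}(w) as formal power series (equivalently, Q^ν_{D,G}(w) = K^ν_{D,G}(w)/K^0_{D,G}(w)). -/
/-- `P_i(D,G;ν,N) = -Σ_j ν_j (D⁻¹)_{ji} - Σ_j N_j (G D⁻¹)_{ji}`. -/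
noncomputable def Pfin {H : Type*} [Fintype H] [DecidableEq H]
    (D G : Matrix H H ℂ) (ν : H → ℂ) (N : H →₀ ℕ) (i : H) : ℂ :=
  -(∑ j, ν j * D⁻¹ j i) - ∑ j, (N j : ℂ) * (G * D⁻¹) j i

/-- The power series `K^ν_{D,G}(w) = Σ_N (∏_{i∈H(N)} binom(P_i+N_i, N_i)) w^N`. -/
noncomputable def Kfin {H : Type*} [Fintype H] [DecidableEq H]
    (D G : Matrix H H ℂ) (ν : H → ℂ) : MvPowerSeries H ℂ :=
  fun N => ∏ i ∈ N.support, binomC (Pfin D G ν N i + (N i : ℂ)) (N i)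

/-- `F_{ij}(D,G;ν,N) = δ_{ij} P_j + (G D⁻¹)_{ij} N_j`. -/
noncomputable def Ffin {H : Type*} [Fintype H] [DecidableEq H]
    (D G : Matrix H H ℂ) (ν : H → ℂ) (N : H →₀ ℕ) (i j : H) : ℂ :=
  (if i = j then Pfin D G ν N j else 0) + (G * D⁻¹) i j * (N j : ℂ)

/-- The power series
`R^ν_{D,G}(w) = Σ_N (det_{H(N)} F) (∏_{i∈H(N)} (1/N_i) binom(P_i+N_i-1, N_i-1)) w^N`. -/
noncomputable def Rfin {H : Type*} [Fintype H] [DecidableEq H]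
    (D G : Matrix H H ℂ) (ν : H → ℂ) : MvPowerSeries H ℂ :=
  fun N =>
    (Matrix.det (Matrix.of fun i j : N.support => Ffin D G ν N i j)) *
      ∏ i ∈ N.support, (1 / (N i : ℂ)) * binomC (Pfin D G ν N i + (N i : ℂ) - 1) (N i - 1)

lemma binomC_zero (a : ℂ) : binomC a 0 = 1 := by simp [binomC]

lemma binomC_succ_succ (a : ℂ) (b : ℕ) :
    binomC (a + 1) (b + 1) = binomC a (b + 1) + binomC a b := by
  have h1 : (∏ j ∈ Finset.range (b + 1), (a + 1 - (j : ℂ)))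
      = (∏ j ∈ Finset.range b, (a - (j : ℂ))) * (a + 1) := by
    rw [Finset.prod_range_succ' (fun j => (a + 1 - (j : ℂ)))]
    simp [add_sub_add_right_eq_sub]
  have h2 : (∏ j ∈ Finset.range (b + 1), (a - (j : ℂ)))
      = (∏ j ∈ Finset.range b, (a - (j : ℂ))) * (a - b) := Finset.prod_range_succ _ _
  have hb : ((b.factorial : ℂ)) ≠ 0 := Nat.cast_ne_zero.mpr b.factorial_ne_zero
  have hb1 : (((b + 1).factorial : ℂ)) ≠ 0 := Nat.cast_ne_zero.mpr (b + 1).factorial_ne_zero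
  have hf : (((b + 1).factorial : ℂ)) = (b + 1) * b.factorial := by
    rw [Nat.factorial_succ]; push_cast; ring
  unfold binomC
  rw [h1, h2, hf]
  have hd : ((b : ℂ) + 1) ≠ 0 := by
    have := Nat.cast_ne_zero (R := ℂ).mpr (Nat.succ_ne_zero b)
    push_cast at this
    exact this
  field_simp
  ring

lemma binomC_natCast (n k : ℕ) : binomC (n : ℂ) k = (n.choose k : ℂ) := by
  induction n generalizing k with
  | zero =>
    cases k with
    | zero => simp [binomC_zero]
    | succ k =>
      have : ((0:ℕ) : ℂ) - ((0:ℕ) : ℂ) = 0 := by simp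
      simp [binomC, Finset.prod_range_succ']
  | succ n ih =>
    cases k with
    | zero => simp [binomC_zero]
    | succ k =>
      have : ((n + 1 : ℕ) : ℂ) = (n : ℂ) + 1 := by push_cast; ring
      rw [this, binomC_succ_succ, ih, ih, Nat.choose_succ_succ]
      push_cast; ring

lemma binomC_nat_of_lt {n k : ℕ} (h : n < k) : binomC (n : ℂ) k = 0 := by
  rw [binomC_natCast, Nat.choose_eq_zero_of_lt h, Nat.cast_zero]

/-- one-variable polynomial functions -/
def IsPolyFun (f : ℂ → ℂ) : Prop := ∃ p : Polynomial ℂ, ∀ x, f x = p.eval x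

lemma IsPolyFun.const (c : ℂ) : IsPolyFun (fun _ => c) := ⟨Polynomial.C c, by simp⟩

lemma IsPolyFun.add {f g : ℂ → ℂ} (hf : IsPolyFun f) (hg : IsPolyFun g) :
    IsPolyFun (fun x => f x + g x) := by
  obtain ⟨p, hp⟩ := hf; obtain ⟨q, hq⟩ := hg
  exact ⟨p + q, fun x => by simp [hp, hq]⟩

lemma IsPolyFun.mul {f g : ℂ → ℂ} (hf : IsPolyFun f) (hg : IsPolyFun g) :
    IsPolyFun (fun x => f x * g x) := by
  obtain ⟨p, hp⟩ := hf; obtain ⟨q, hq⟩ := hg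
  exact ⟨p * q, fun x => by simp [hp, hq]⟩

lemma IsPolyFun.sub {f g : ℂ → ℂ} (hf : IsPolyFun f) (hg : IsPolyFun g) :
    IsPolyFun (fun x => f x - g x) := by
  obtain ⟨p, hp⟩ := hf; obtain ⟨q, hq⟩ := hg
  exact ⟨p - q, fun x => by simp [hp, hq]⟩

lemma IsPolyFun.sum {ι : Type*} (s : Finset ι) (f : ι → ℂ → ℂ)
    (h : ∀ i ∈ s, IsPolyFun (f i)) : IsPolyFun (fun x => ∑ i ∈ s, f i x) := by
  classical
  induction s using Finset.induction with
  | empty => simpa using IsPolyFun.const 0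
  | insert a s hni ih =>
    simp only [Finset.sum_insert hni]
    exact (h a (Finset.mem_insert_self a s)).add
      (ih fun i hi => h i (Finset.mem_insert_of_mem hi))

lemma IsPolyFun.prod {ι : Type*} (s : Finset ι) (f : ι → ℂ → ℂ)
    (h : ∀ i ∈ s, IsPolyFun (f i)) : IsPolyFun (fun x => ∏ i ∈ s, f i x) := by
  classical
  induction s using Finset.induction with
  | empty => simpa using IsPolyFun.const 1
  | insert a s hni ih =>
    simp only [Finset.prod_insert hni]
    exact (h a (Finset.mem_insert_self a s)).mul
      (ih fun i hi => h i (Finset.mem_insert_of_mem hi))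

lemma isPolyFun_binomC_affine (c d : ℂ) (k : ℕ) :
    IsPolyFun (fun t => binomC (c + d * t) k) := by
  have : IsPolyFun (fun t => ∏ j ∈ Finset.range k, (c + d * t - (j : ℂ))) :=
    IsPolyFun.prod (Finset.range k) _ (fun j _ =>
      ⟨Polynomial.C c + Polynomial.C d * Polynomial.X - Polynomial.C (j : ℂ), by simp⟩)
  obtain ⟨p, hp⟩ := this
  exact ⟨p * Polynomial.C ((Nat.factorial k : ℂ))⁻¹, fun x => by
    simp [binomC, hp, div_eq_mul_inv]⟩

/-- two polynomial functions agreeing on the naturals agree everywhere -/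
lemma polyfun_eq_of_nat {f g : ℂ → ℂ} (hf : IsPolyFun f) (hg : IsPolyFun g)
    (h : ∀ n : ℕ, f (n : ℂ) = g (n : ℂ)) : ∀ x, f x = g x := by
  obtain ⟨p, hp⟩ := hf; obtain ⟨q, hq⟩ := hg
  have : p = q := by
    apply Polynomial.eq_of_infinite_eval_eq
    apply Set.infinite_of_injective_forall_mem (f := fun n : ℕ => (n : ℂ))
      (Nat.cast_injective)
    intro n
    simp only [Set.mem_setOf_eq, ← hp, ← hq]
    exact h n
  intro x; rw [hp, hq, this]

/-- a polynomial function with period 1 is constant -/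
lemma polyfun_const_of_periodic {f : ℂ → ℂ} (hf : IsPolyFun f)
    (h : ∀ x, f (x + 1) = f x) : ∀ x, f x = f 0 := by
  have hnat : ∀ n : ℕ, f (n : ℂ) = f 0 := by
    intro n
    induction n with
    | zero => simp
    | succ n ih => push_cast; rw [h, ih]
  exact polyfun_eq_of_nat hf (IsPolyFun.const (f 0)) (fun n => by simpa using hnat n)

section PS
variable {H : Type*}

/-- total degree of an exponent -/
def fdeg (N : H →₀ ℕ) : ℕ := N.sum fun _ e => e

lemma fdeg_add (A B : H →₀ ℕ) : fdeg (A + B) = fdeg A + fdeg B :=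
  Finsupp.sum_add_index' (fun _ => rfl) (fun _ _ _ => rfl)

lemma one_le_fdeg {A : H →₀ ℕ} (h : A ≠ 0) : 1 ≤ fdeg A := by
  obtain ⟨i, hi⟩ : ∃ i, A i ≠ 0 := by
    by_contra hc
    push_neg at hc
    exact h (Finsupp.ext fun i => hc i)
  have hmem : i ∈ A.support := Finsupp.mem_support_iff.mpr hi
  calc 1 ≤ A i := Nat.one_le_iff_ne_zero.mpr hi
  _ ≤ ∑ j ∈ A.support, A j := Finset.single_le_sum (fun _ _ => Nat.zero_le _) hmem
  _ = fdeg A := rfl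

lemma coeff_pow_eq_zero {f : MvPowerSeries H ℂ}
    (hf : MvPowerSeries.constantCoeff f = 0) :
    ∀ (k : ℕ) (N : H →₀ ℕ), fdeg N < k → MvPowerSeries.coeff N (f ^ k) = 0 := by
  classical
  intro k
  induction k with
  | zero => intro N h; omega
  | succ k ih =>
    intro N h
    rw [pow_succ, MvPowerSeries.coeff_mul]
    apply Finset.sum_eq_zero
    rintro ⟨A, B⟩ hAB
    have hAB' : A + B = N := Finset.HasAntidiagonal.mem_antidiagonal.mp hAB
    by_cases hB : B = 0
    · subst hB
      have h0 : MvPowerSeries.coeff (0 : H →₀ ℕ) f = 0 := by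
        rw [MvPowerSeries.coeff_zero_eq_constantCoeff]; exact hf
      simp [h0]
    · have hA : fdeg A < k := by
        have := one_le_fdeg hB
        have hsum : fdeg A + fdeg B = fdeg N := by rw [← fdeg_add, hAB']
        omega
      simp [ih A hA]

lemma coeff_cpow_stable {f : MvPowerSeries H ℂ}
    (hf : MvPowerSeries.constantCoeff f = 1) (α : ℂ) (N : H →₀ ℕ)
    {m : ℕ} (hm : fdeg N ≤ m) :
    MvPowerSeries.coeff N (cpow f α) =
      ∑ k ∈ Finset.range (m + 1), binomC α k * MvPowerSeries.coeff N ((f - 1) ^ k) := by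
  have hf1 : MvPowerSeries.constantCoeff (f - 1) = 0 := by
    rw [map_sub, hf]; simp
  have hdef : MvPowerSeries.coeff N (cpow f α) =
      ∑ k ∈ Finset.range (fdeg N + 1), binomC α k * MvPowerSeries.coeff N ((f - 1) ^ k) :=
    rfl
  rw [hdef]
  apply Finset.sum_subset
  · exact Finset.range_subset_range.mpr (by omega)
  · intro k hk hk'
    have : fdeg N < k := by
      simp only [Finset.mem_range] at hk hk'
      omega
    rw [coeff_pow_eq_zero hf1 k N this, mul_zero]
end PS

section PS2
variable {H : Type*}

lemma cpow_natCast {f : MvPowerSeries H ℂ}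
    (hf : MvPowerSeries.constantCoeff f = 1) (n : ℕ) :
    cpow f (n : ℂ) = f ^ n := by
  ext N
  rw [coeff_cpow_stable hf _ N (le_max_left (fdeg N) n)]
  have hbin : f ^ n = ∑ k ∈ Finset.range (n + 1),
      MvPowerSeries.C ((n.choose k : ℂ)) * (f - 1) ^ k := by
    have := add_pow (f - 1) 1 n
    simp only [sub_add_cancel, one_pow, mul_one] at this
    rw [this]
    apply Finset.sum_congr rfl
    intro k _
    rw [mul_comm, map_natCast (MvPowerSeries.C (σ := H) (R := ℂ)) (n.choose k)]
  rw [hbin, map_sum]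
  rw [← Finset.sum_subset (Finset.range_subset_range.mpr
    (by omega : n + 1 ≤ max (fdeg N) n + 1))]
  · apply Finset.sum_congr rfl
    intro k _
    rw [binomC_natCast, MvPowerSeries.coeff_C_mul]
  · intro k hk hk'
    simp only [Finset.mem_range] at hk hk'
    rw [binomC_nat_of_lt (by omega), zero_mul]

end PS2
section PS3
variable {H : Type*}

lemma isPolyFun_coeff_cpow (f : MvPowerSeries H ℂ) (M : H →₀ ℕ) (c d : ℂ) :
    IsPolyFun (fun t => MvPowerSeries.coeff M (cpow f (c + d * t))) := by
  have hdef : (fun t => MvPowerSeries.coeff M (cpow f (c + d * t))) =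
      fun t => ∑ k ∈ Finset.range (fdeg M + 1),
        binomC (c + d * t) k * MvPowerSeries.coeff M ((f - 1) ^ k) := rfl
  rw [hdef]
  exact IsPolyFun.sum _ _ (fun k _ =>
    (isPolyFun_binomC_affine c d k).mul (IsPolyFun.const _))

lemma cpow_add {f : MvPowerSeries H ℂ}
    (hf : MvPowerSeries.constantCoeff f = 1) (α β : ℂ) :
    cpow f (α + β) = cpow f α * cpow f β := by
  classical
  have hnat : ∀ a b : ℕ, cpow f ((a : ℂ) + (b : ℂ)) = cpow f a * cpow f b := by
    intro a b
    have : ((a : ℂ) + (b : ℂ)) = ((a + b : ℕ) : ℂ) := by push_cast; ring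
    rw [this, cpow_natCast hf, cpow_natCast hf, cpow_natCast hf, pow_add]
  -- step B : β a natural number
  have hstepB : ∀ (b : ℕ) (α : ℂ), cpow f (α + (b : ℂ)) = cpow f α * cpow f (b : ℂ) := by
    intro b α
    ext N
    have h1 : IsPolyFun (fun t => MvPowerSeries.coeff N (cpow f (t + (b : ℂ)))) := by
      have : (fun t => MvPowerSeries.coeff N (cpow f (t + (b : ℂ)))) =
          fun t => MvPowerSeries.coeff N (cpow f ((b : ℂ) + 1 * t)) := by
        funext t; ring_nf
      rw [this]; exact isPolyFun_coeff_cpow f N _ _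
    have h2 : IsPolyFun (fun t => MvPowerSeries.coeff N (cpow f t * cpow f (b : ℂ))) := by
      have hdef : (fun t => MvPowerSeries.coeff N (cpow f t * cpow f (b : ℂ))) =
          fun t => ∑ p ∈ Finset.HasAntidiagonal.antidiagonal N,
            MvPowerSeries.coeff p.1 (cpow f t) * MvPowerSeries.coeff p.2 (cpow f (b : ℂ)) := by
        funext t; exact MvPowerSeries.coeff_mul N _ _
      rw [hdef]
      refine IsPolyFun.sum _ _ (fun p _ => IsPolyFun.mul ?_ (IsPolyFun.const _))
      have : (fun t => MvPowerSeries.coeff p.1 (cpow f t)) =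
          fun t => MvPowerSeries.coeff p.1 (cpow f (0 + 1 * t)) := by
        funext t; ring_nf
      rw [this]; exact isPolyFun_coeff_cpow f p.1 0 1
    refine polyfun_eq_of_nat h1 h2 (fun a => ?_) α
    rw [hnat a b]
  -- step C : general
  ext N
  have h1 : IsPolyFun (fun t => MvPowerSeries.coeff N (cpow f (α + t))) := by
    have : (fun t => MvPowerSeries.coeff N (cpow f (α + t))) =
        fun t => MvPowerSeries.coeff N (cpow f (α + 1 * t)) := by
      funext t; ring_nf
    rw [this]; exact isPolyFun_coeff_cpow f N _ _
  have h2 : IsPolyFun (fun t => MvPowerSeries.coeff N (cpow f α * cpow f t)) := by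
    have hdef : (fun t => MvPowerSeries.coeff N (cpow f α * cpow f t)) =
        fun t => ∑ p ∈ Finset.HasAntidiagonal.antidiagonal N,
          MvPowerSeries.coeff p.1 (cpow f α) * MvPowerSeries.coeff p.2 (cpow f t) := by
      funext t; exact MvPowerSeries.coeff_mul N _ _
    rw [hdef]
    refine IsPolyFun.sum _ _ (fun p _ => IsPolyFun.mul (IsPolyFun.const _) ?_)
    have : (fun t => MvPowerSeries.coeff p.2 (cpow f t)) =
        fun t => MvPowerSeries.coeff p.2 (cpow f (0 + 1 * t)) := by
      funext t; ring_nf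
    rw [this]; exact isPolyFun_coeff_cpow f p.2 0 1
  refine polyfun_eq_of_nat h1 h2 (fun b => ?_) β
  rw [hstepB b α]

lemma cpow_zero {f : MvPowerSeries H ℂ}
    (hf : MvPowerSeries.constantCoeff f = 1) : cpow f 0 = 1 := by
  have := cpow_natCast hf 0
  simpa using this

end PS3
section Krec
variable {H : Type*} [Fintype H] [DecidableEq H] (D G : Matrix H H ℂ)

lemma Pfin_shift_D (hD : D.det ≠ 0) (ν : H → ℂ) (N : H →₀ ℕ) (i k : H) :
    Pfin D G (fun j => ν j + D i j) N k
      = Pfin D G ν N k - (if i = k then 1 else 0) := by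
  have hDD : D * D⁻¹ = 1 := Matrix.mul_nonsing_inv D (isUnit_iff_ne_zero.mpr hD)
  have h : ∑ j, D i j * D⁻¹ j k = (if i = k then 1 else 0) := by
    rw [← Matrix.mul_apply, hDD, Matrix.one_apply]
  unfold Pfin
  simp only [add_mul, Finset.sum_add_distrib, h]
  ring

lemma Pfin_shift_G (ν : H → ℂ) (N : H →₀ ℕ) (i : H) (hNi : 1 ≤ N i) (k : H) :
    Pfin D G (fun j => ν j + G i j) (N - Finsupp.single i 1) k = Pfin D G ν N k := by
  have hG : ∑ j, G i j * D⁻¹ j k = (G * D⁻¹) i k := (Matrix.mul_apply).symm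
  have hsub : ∀ j, ((((N - Finsupp.single i 1 : H →₀ ℕ) j : ℕ)) : ℂ)
      = (N j : ℂ) - (if i = j then 1 else 0) := by
    intro j
    rw [Finsupp.tsub_apply]
    by_cases hij : i = j
    · subst hij
      rw [Finsupp.single_eq_same, if_pos rfl, Nat.cast_sub hNi, Nat.cast_one]
    · rw [Finsupp.single_eq_of_ne' hij, if_neg hij, Nat.sub_zero, sub_zero]
  unfold Pfin
  simp only [add_mul, Finset.sum_add_distrib, hG, hsub, sub_mul, Finset.sum_sub_distrib,
    ite_mul, one_mul, zero_mul, Finset.sum_ite_eq, Finset.mem_univ, if_pos]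
  ring

omit [Fintype H] in
lemma coeff_X_mul' (i : H) (S : MvPowerSeries H ℂ) (N : H →₀ ℕ) :
    MvPowerSeries.coeff N (MvPowerSeries.X i * S)
      = if 1 ≤ N i then MvPowerSeries.coeff (N - Finsupp.single i 1) S else 0 := by
  rw [show (MvPowerSeries.X i : MvPowerSeries H ℂ)
      = MvPowerSeries.monomial (Finsupp.single i 1) 1 from rfl,
    MvPowerSeries.coeff_monomial_mul]
  have : Finsupp.single i 1 ≤ N ↔ 1 ≤ N i := Finsupp.single_le_iff
  split_ifs with h1 h2 h2
  · rw [one_mul]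
  · exact absurd (this.mp h1) h2
  · exact absurd (this.mpr h2) h1
  · rfl

end Krec
section Krec2
variable {H : Type*} [Fintype H] [DecidableEq H] (D G : Matrix H H ℂ)

lemma Krec (hD : D.det ≠ 0) (ν : H → ℂ) (i : H) :
    Kfin D G (fun j => ν j + D i j)
      = Kfin D G ν - MvPowerSeries.X i * Kfin D G (fun j => ν j + G i j) := by
  ext N
  rw [map_sub, coeff_X_mul']
  have hKD : MvPowerSeries.coeff N (Kfin D G (fun j => ν j + D i j))
      = ∏ k ∈ N.support,
          binomC (Pfin D G ν N k - (if i = k then 1 else 0) + (N k : ℂ)) (N k) := by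
    refine Finset.prod_congr rfl (fun k _ => ?_)
    rw [Pfin_shift_D D G hD ν N i k]
  rw [hKD]
  have hKν : MvPowerSeries.coeff N (Kfin D G ν)
      = ∏ k ∈ N.support, binomC (Pfin D G ν N k + (N k : ℂ)) (N k) := rfl
  rw [hKν]
  by_cases hNi : 1 ≤ N i
  · rw [if_pos hNi]
    set N' : H →₀ ℕ := N - Finsupp.single i 1 with hN'
    have hN'k : ∀ k, k ≠ i → N' k = N k := by
      intro k hk
      rw [hN', Finsupp.tsub_apply, Finsupp.single_eq_of_ne' (fun h => hk h.symm), Nat.sub_zero]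
    have hN'i : N' i = N i - 1 := by
      rw [hN', Finsupp.tsub_apply, Finsupp.single_eq_same]
    have hKG : MvPowerSeries.coeff N' (Kfin D G (fun j => ν j + G i j))
        = ∏ k ∈ N'.support, binomC (Pfin D G ν N k + (N' k : ℂ)) (N' k) := by
      refine Finset.prod_congr rfl (fun k _ => ?_)
      rw [hN', Pfin_shift_G D G ν N i hNi k]
    have hsub : N'.support ⊆ N.support := by
      intro k hk
      rw [Finsupp.mem_support_iff] at hk ⊢
      intro hNk
      apply hk
      by_cases hki : k = i
      · subst hki; omega
      · rw [hN'k k hki]; exact hNk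
    have hext : (∏ k ∈ N'.support, binomC (Pfin D G ν N k + (N' k : ℂ)) (N' k))
        = ∏ k ∈ N.support, binomC (Pfin D G ν N k + (N' k : ℂ)) (N' k) := by
      refine Finset.prod_subset hsub (fun k _ hk' => ?_)
      rw [Finsupp.notMem_support_iff] at hk'
      rw [hk', Nat.cast_zero, add_zero, binomC_zero]
    rw [hKG, hext]
    have hi : i ∈ N.support := Finsupp.mem_support_iff.mpr (by omega)
    rw [← Finset.mul_prod_erase _ _ hi, ← Finset.mul_prod_erase _ _ hi,
      ← Finset.mul_prod_erase _ _ hi]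
    have herase1 : (∏ k ∈ N.support.erase i,
        binomC (Pfin D G ν N k - (if i = k then 1 else 0) + (N k : ℂ)) (N k))
        = ∏ k ∈ N.support.erase i, binomC (Pfin D G ν N k + (N k : ℂ)) (N k) := by
      refine Finset.prod_congr rfl (fun k hk => ?_)
      have : i ≠ k := fun h => (Finset.mem_erase.mp hk).1 h.symm
      rw [if_neg this, sub_zero]
    have herase2 : (∏ k ∈ N.support.erase i,
        binomC (Pfin D G ν N k + (N' k : ℂ)) (N' k))
        = ∏ k ∈ N.support.erase i, binomC (Pfin D G ν N k + (N k : ℂ)) (N k) := by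
      refine Finset.prod_congr rfl (fun k hk => ?_)
      rw [hN'k k (Finset.mem_erase.mp hk).1]
    rw [herase1, herase2, if_pos rfl]
    rw [← sub_mul]
    congr 1
    -- factor identity at i
    obtain ⟨m, hm⟩ : ∃ m, N i = m + 1 := ⟨N i - 1, by omega⟩
    have hcast : ((N' i : ℕ) : ℂ) = (m : ℂ) := by rw [hN'i, hm]; push_cast; ring
    rw [hN'i, hm]
    have hpascal := binomC_succ_succ (Pfin D G ν N i + (m : ℂ)) m
    have h1 : Pfin D G ν N i + (m : ℂ) + 1 = Pfin D G ν N i + ((m + 1 : ℕ) : ℂ) := by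
      push_cast; ring
    have h2 : Pfin D G ν N i - 1 + ((m + 1 : ℕ) : ℂ) = Pfin D G ν N i + (m : ℂ) := by
      push_cast; ring
    have h3 : Pfin D G ν N i + ((m + 1 - 1 : ℕ) : ℂ) = Pfin D G ν N i + (m : ℂ) := by
      push_cast; ring
    rw [h2, h3]
    rw [h1] at hpascal
    rw [hpascal]
    simp only [Nat.add_sub_cancel]
    ring
  · rw [if_neg hNi, sub_zero]
    refine Finset.prod_congr rfl (fun k hk => ?_)
    have hki : i ≠ k := by
      intro h
      subst h
      rw [Finsupp.mem_support_iff] at hk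
      omega
    rw [if_neg hki, sub_zero]

end Krec2
section PolyCoeff
variable {H : Type*} [Fintype H] [DecidableEq H]

lemma isPolyFun_coeff_prod {ι : Type*} (s : Finset ι) (F : ι → ℂ → MvPowerSeries H ℂ)
    (h : ∀ i ∈ s, ∀ M : H →₀ ℕ, IsPolyFun (fun t => MvPowerSeries.coeff M (F i t))) :
    ∀ N : H →₀ ℕ, IsPolyFun (fun t => MvPowerSeries.coeff N (∏ i ∈ s, F i t)) := by
  classical
  induction s using Finset.induction with
  | empty =>
    intro N
    simpa using IsPolyFun.const (MvPowerSeries.coeff N (1 : MvPowerSeries H ℂ))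
  | insert a s hni ih =>
    intro N
    have hdef : (fun t => MvPowerSeries.coeff N (∏ i ∈ insert a s, F i t)) =
        fun t => ∑ p ∈ Finset.HasAntidiagonal.antidiagonal N,
          MvPowerSeries.coeff p.1 (F a t) * MvPowerSeries.coeff p.2 (∏ i ∈ s, F i t) := by
      funext t
      rw [Finset.prod_insert hni, MvPowerSeries.coeff_mul]
    rw [hdef]
    exact IsPolyFun.sum _ _ (fun p _ =>
      (h a (Finset.mem_insert_self a s) p.1).mul
        (ih (fun i hi => h i (Finset.mem_insert_of_mem hi)) p.2))

lemma isPolyFun_coeff_T (Q : H → MvPowerSeries H ℂ) (K : MvPowerSeries H ℂ)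
    (μ v : H → ℂ) (N : H →₀ ℕ) :
    IsPolyFun (fun t => MvPowerSeries.coeff N
      ((∏ i, cpow (Q i) (μ i + t * v i)) * K)) := by
  classical
  have hprod := isPolyFun_coeff_prod Finset.univ
    (fun i t => cpow (Q i) (μ i + t * v i)) ?_
  · have hdef : (fun t => MvPowerSeries.coeff N ((∏ i, cpow (Q i) (μ i + t * v i)) * K)) =
        fun t => ∑ p ∈ Finset.HasAntidiagonal.antidiagonal N,
          MvPowerSeries.coeff p.1 (∏ i, cpow (Q i) (μ i + t * v i)) *
            MvPowerSeries.coeff p.2 K := by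
      funext t; rw [MvPowerSeries.coeff_mul]
    rw [hdef]
    exact IsPolyFun.sum _ _ (fun p _ => (hprod p.1).mul (IsPolyFun.const _))
  · intro i _ M
    have : (fun t => MvPowerSeries.coeff M (cpow (Q i) (μ i + t * v i))) =
        fun t => MvPowerSeries.coeff M (cpow (Q i) (μ i + v i * t)) := by
      funext t; ring_nf
    rw [this]
    exact isPolyFun_coeff_cpow (Q i) M (μ i) (v i)

lemma isPolyFun_coeff_K (D G : Matrix H H ℂ) (μ v : H → ℂ) (N : H →₀ ℕ) :
    IsPolyFun (fun t => MvPowerSeries.coeff N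
      (Kfin D G (fun j => μ j + t * v j))) := by
  have hP : ∀ (t : ℂ) (k : H), Pfin D G (fun j => μ j + t * v j) N k
      = Pfin D G μ N k + (-(∑ j, v j * D⁻¹ j k)) * t := by
    intro t k
    unfold Pfin
    simp only [add_mul, Finset.sum_add_distrib]
    rw [show (∑ j, t * v j * D⁻¹ j k) = t * ∑ j, v j * D⁻¹ j k by
      rw [Finset.mul_sum]; exact Finset.sum_congr rfl (fun j _ => by ring)]
    ring
  have hdef : (fun t => MvPowerSeries.coeff N (Kfin D G (fun j => μ j + t * v j))) =
      fun t => ∏ k ∈ N.support,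
        binomC ((Pfin D G μ N k + (N k : ℂ)) + (-(∑ j, v j * D⁻¹ j k)) * t) (N k) := by
    funext t
    refine Finset.prod_congr rfl (fun k _ => ?_)
    rw [hP t k]
    ring_nf
  rw [hdef]
  exact IsPolyFun.prod _ _ (fun k _ => isPolyFun_binomC_affine _ _ _)

end PolyCoeff
/-- Let `(Q_i)` be the unique solution of the finite `Q`-system for
matrices `D, G` with `det D ≠ 0`, and for `ν ∈ ℂ^H` set `Q^ν = ∏_i Q_i^{ν_i}`.
Then `Q^ν_{D,G}(w) · K^0_{D,G}(w) = K^ν_{D,G}(w)`. -/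
theorem statement2 {H : Type*} [Fintype H] [DecidableEq H]
    (D G : Matrix H H ℂ) (hD : D.det ≠ 0)
    (Q : H → MvPowerSeries H ℂ)
    (hQ1 : ∀ i, MvPowerSeries.constantCoeff (Q i) = 1)
    (hQ2 : ∀ i, (∏ j, cpow (Q j) (D i j)) +
      MvPowerSeries.X i * ∏ j, cpow (Q j) (G i j) = 1)
    (ν : H → ℂ) :
    (∏ i, cpow (Q i) (ν i)) * Kfin D G 0 = Kfin D G ν := by
  classical
  set T : (H → ℂ) → MvPowerSeries H ℂ :=
    fun μ => (∏ i, cpow (Q i) (μ i)) * Kfin D G 0 with hT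
  -- power series recursion for T
  have hTrec : ∀ (μ : H → ℂ) (i : H),
      T (fun j => μ j + D i j)
        = T μ - MvPowerSeries.X i * T (fun j => μ j + G i j) := by
    intro μ i
    have hsplitD : (∏ j, cpow (Q j) (μ j + D i j))
        = (∏ j, cpow (Q j) (μ j)) * ∏ j, cpow (Q j) (D i j) := by
      rw [← Finset.prod_mul_distrib]
      exact Finset.prod_congr rfl (fun j _ => cpow_add (hQ1 j) _ _)
    have hsplitG : (∏ j, cpow (Q j) (μ j + G i j))
        = (∏ j, cpow (Q j) (μ j)) * ∏ j, cpow (Q j) (G i j) := by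
      rw [← Finset.prod_mul_distrib]
      exact Finset.prod_congr rfl (fun j _ => cpow_add (hQ1 j) _ _)
    have hQ2' : (∏ j, cpow (Q j) (D i j))
        = 1 - MvPowerSeries.X i * ∏ j, cpow (Q j) (G i j) := eq_sub_of_add_eq (hQ2 i)
    rw [hT]
    simp only
    rw [hsplitD, hsplitG, hQ2']
    ring
  -- main coefficient claim by strong induction on degree
  have main : ∀ n : ℕ, ∀ N : H →₀ ℕ, fdeg N = n → ∀ μ : H → ℂ,
      MvPowerSeries.coeff N (T μ) = MvPowerSeries.coeff N (Kfin D G μ) := by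
    intro n
    induction n using Nat.strong_induction_on with
    | _ n IH =>
      intro N hN μ0
      set d : (H → ℂ) → ℂ := fun μ =>
        MvPowerSeries.coeff N (T μ) - MvPowerSeries.coeff N (Kfin D G μ) with hd
      suffices hs : d μ0 = 0 by
        rw [hd] at hs
        simp only at hs
        exact sub_eq_zero.mp hs
      -- claim 1 : d is invariant under translation by rows of D
      have claim1 : ∀ (μ : H → ℂ) (i : H), d (fun j => μ j + D i j) = d μ := by
        intro μ i
        have hX : MvPowerSeries.coeff N
              (MvPowerSeries.X i * T (fun j => μ j + G i j))
            = MvPowerSeries.coeff N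
              (MvPowerSeries.X i * Kfin D G (fun j => μ j + G i j)) := by
          rw [coeff_X_mul', coeff_X_mul']
          by_cases hNi : 1 ≤ N i
          · rw [if_pos hNi, if_pos hNi]
            set N' : H →₀ ℕ := N - Finsupp.single i 1 with hN'
            have hdeg : fdeg N' < n := by
              have hle : Finsupp.single i 1 ≤ N := Finsupp.single_le_iff.mpr hNi
              have : N' + Finsupp.single i 1 = N := tsub_add_cancel_of_le hle
              have h2 : fdeg N' + fdeg (Finsupp.single i 1) = fdeg N := by
                rw [← fdeg_add, this]
              have h3 : fdeg (Finsupp.single i 1) = 1 := by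
                unfold fdeg
                rw [Finsupp.sum_single_index rfl]
              omega
            exact IH (fdeg N') hdeg N' rfl _
          · rw [if_neg hNi, if_neg hNi]
        rw [hd]
        simp only
        rw [hTrec μ i, Krec D G hD μ i, map_sub, map_sub, hX]
        ring
      -- claim 2 : invariance under arbitrary multiples of rows of D
      have claim2 : ∀ (μ : H → ℂ) (i : H) (c : ℂ),
          d (fun j => μ j + c * D i j) = d μ := by
        intro μ i c
        have hpoly : IsPolyFun (fun t => d (fun j => μ j + t * D i j)) := by
          apply IsPolyFun.sub
          · exact isPolyFun_coeff_T Q (Kfin D G 0) μ (fun j => D i j) N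
          · exact isPolyFun_coeff_K D G μ (fun j => D i j) N
        have hper : ∀ t : ℂ, d (fun j => μ j + (t + 1) * D i j)
            = d (fun j => μ j + t * D i j) := by
          intro t
          have : (fun j => μ j + (t + 1) * D i j)
              = fun j => (μ j + t * D i j) + D i j := by
            funext j; ring
          rw [this]
          exact claim1 (fun j => μ j + t * D i j) i
        have := polyfun_const_of_periodic hpoly hper c
        have h0 : (fun j => μ j + (0 : ℂ) * D i j) = μ := by
          funext j; ring
        rw [h0] at this
        exact this
      -- claim 3 : invariance under sums of multiples of rows of D
      have claim3 : ∀ s : Finset H, ∀ (c : H → ℂ) (μ : H → ℂ),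
          d (fun j => μ j + ∑ i ∈ s, c i * D i j) = d μ := by
        intro s
        induction s using Finset.induction with
        | empty => intro c μ; simp
        | insert a s hni ih =>
          intro c μ
          have : (fun j => μ j + ∑ i ∈ insert a s, c i * D i j)
              = fun j => ((fun j' => μ j' + ∑ i ∈ s, c i * D i j') j) + c a * D a j := by
            funext j
            rw [Finset.sum_insert hni]
            ring
          rw [this, claim2 _ a (c a), ih]
      -- decompose μ0 over the rows of D
      have hDD : D⁻¹ * D = 1 := Matrix.nonsing_inv_mul D (isUnit_iff_ne_zero.mpr hD)
      have hdecomp : (fun j => (0 : ℂ) + ∑ i, (∑ k, μ0 k * D⁻¹ k i) * D i j) = μ0 := by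
        funext j
        rw [zero_add]
        have : ∑ i, (∑ k, μ0 k * D⁻¹ k i) * D i j
            = ∑ k, μ0 k * ∑ i, D⁻¹ k i * D i j := by
          simp only [Finset.sum_mul]
          rw [Finset.sum_comm]
          refine Finset.sum_congr rfl (fun k _ => ?_)
          rw [Finset.mul_sum]
          refine Finset.sum_congr rfl (fun i _ => ?_)
          ring
        rw [this]
        have h1 : ∀ k, (∑ i, D⁻¹ k i * D i j) = if k = j then 1 else 0 := by
          intro k
          rw [← Matrix.mul_apply, hDD, Matrix.one_apply]
        simp only [h1, mul_ite, mul_one, mul_zero]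
        rw [Finset.sum_ite_eq' Finset.univ j μ0]
        simp
      have hd0 : d (fun _ => (0 : ℂ)) = 0 := by
        rw [hd]
        simp only
        have hT0 : T (fun _ => (0 : ℂ)) = Kfin D G (fun _ => (0 : ℂ)) := by
          rw [hT]
          simp only
          have : ∀ i ∈ Finset.univ, cpow (Q i) ((0 : ℂ)) = 1 := fun i _ => cpow_zero (hQ1 i)
          rw [Finset.prod_congr rfl this, Finset.prod_const_one, one_mul]
          rfl
        rw [hT0]
        ring
      have := claim3 Finset.univ (fun i => ∑ k, μ0 k * D⁻¹ k i) (fun _ => (0 : ℂ))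
      rw [hdecomp] at this
      rw [this]
      exact hd0
  ext N
  have := main (fdeg N) N rfl ν
  rw [hT] at this
  exact this
end

section
/- Let H be a countably infinite index set with an increasing sequence H_1 ⊂ H_2 ⊂ ⋯ of finite subsets whose union is H, and let G = (G_{ij})_{i,j∈H} be any complex matrix. Then there exists a unique family (Q_i(w))_{i∈H} of formal power series in w = (w_i)_{i∈H} with unit constant terms satisfying the standard infinite Q-system Q_i(w) + w_i ∏_{j∈H} (Q_j(w))^{G_{ij}} = 1 for all i ∈ H. Moreover, its L-th projections Q_{i,L}(w_L) = p_L(Q_i(w)) are characterized by: Q_{i,L}(w_L) = 1 for i ∉ H_L, and Q_{i,L}(w_L) + w_i ∏_{j∈H_L} (Q_{j,L}(w_L))^{G_{ij}} = 1 for i ∈ H_L. -/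
/-- `HasProdPS f P`: the (possibly infinite) product of the family `f` converges to `P`
in the projective-limit topology on formal power series, i.e. every coefficient of the
finite partial products eventually stabilizes at the corresponding coefficient of `P`,
irrespective of the order of the product. -/
def HasProdPS {ι σ : Type*} (f : ι → MvPowerSeries σ ℂ) (P : MvPowerSeries σ ℂ) : Prop :=
  ∀ N : σ →₀ ℕ, ∃ s : Finset ι, ∀ t : Finset ι, s ⊆ t →
    MvPowerSeries.coeff N (∏ j ∈ t, f j) = MvPowerSeries.coeff N P

/-- A family `(Q_i)` with unit constant terms is a solution of the standard infinite
`Q`-system `Q_i + w_i ∏_j Q_j^{G_{ij}} = 1` (the infinite products being required to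
converge). -/
def InfStdSys {H : Type*} (G : H → H → ℂ) (Q : H → MvPowerSeries H ℂ) : Prop :=
  (∀ i, MvPowerSeries.constantCoeff (Q i) = 1) ∧
  ∀ i, ∃ P, HasProdPS (fun j => cpow (Q j) (G i j)) P ∧
    Q i + MvPowerSeries.X i * P = 1

/-- A family `(Q_i)` with unit constant terms is a solution of the infinite `Q`-system
`∏_j Q_j^{D_{ij}} + w_i ∏_j Q_j^{G_{ij}} = 1` (the infinite products being required to
converge). -/
def InfSys {H : Type*} (D G : H → H → ℂ) (Q : H → MvPowerSeries H ℂ) : Prop :=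
  (∀ i, MvPowerSeries.constantCoeff (Q i) = 1) ∧
  ∀ i, ∃ P₁ P₂, HasProdPS (fun j => cpow (Q j) (D i j)) P₁ ∧
    HasProdPS (fun j => cpow (Q j) (G i j)) P₂ ∧
    P₁ + MvPowerSeries.X i * P₂ = 1

/-- The inversion property of a solution: for each `i`, the iterated infinite product
`∏_j (∏_k Q_k^{(D⁻¹)_{ij} D_{jk}})` exists and equals `Q_i`. -/
def IsCanonicalPS {ι σ : Type*} (Dinv D : ι → ι → ℂ) (Q : ι → MvPowerSeries σ ℂ) : Prop :=
  ∀ i, ∃ inner : ι → MvPowerSeries σ ℂ,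
    (∀ j, HasProdPS (fun k => cpow (Q k) (Dinv i j * D j k)) (inner j)) ∧
    HasProdPS inner (Q i)

/-- Condition (D): `Dinv` is a two-sided inverse of the infinite matrix `D`, all the sums
involved having finitely many nonzero terms. -/
def InvPair {H : Type*} [DecidableEq H] (D Dinv : H → H → ℂ) : Prop :=
  (∀ i k, ({j | D i j * Dinv j k ≠ 0} : Set H).Finite ∧
    ∑ᶠ j, D i j * Dinv j k = if i = k then (1 : ℂ) else 0) ∧
  (∀ i k, ({j | Dinv i j * D j k ≠ 0} : Set H).Finite ∧
    ∑ᶠ j, Dinv i j * D j k = if i = k then (1 : ℂ) else 0)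

/-- Condition (G'): the matrix product `G' = G · Dinv` is well-defined, i.e. for each
`i, k` all but finitely many `G_{ij} (D⁻¹)_{jk}` vanish, and its value is `G'`. -/
def MulDef {H : Type*} (G Dinv G' : H → H → ℂ) : Prop :=
  ∀ i k, ({j | G i j * Dinv j k ≠ 0} : Set H).Finite ∧
    ∑ᶠ j, G i j * Dinv j k = G' i k

/-- The projection `p_L : ℂ[[w]] → ℂ[[w_L]]` (realized as a self-map of `ℂ[[w]]`),
sending `w_i ↦ w_i` for `i ∈ s` and `w_i ↦ 0` otherwise. -/
noncomputable def projL {H : Type*} [DecidableEq H] (s : Finset H)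
    (f : MvPowerSeries H ℂ) : MvPowerSeries H ℂ :=
  fun N => if N.support ⊆ s then MvPowerSeries.coeff N f else 0

set_option linter.unusedSectionVars false

namespace St10

open MvPowerSeries Finset

variable {H : Type*} [DecidableEq H]



/-- total degree of an exponent -/
def deg (N : H →₀ ℕ) : ℕ := N.sum fun _ e => e

lemma deg_add (a b : H →₀ ℕ) : deg (a + b) = deg a + deg b :=
  Finsupp.sum_add_index' (fun _ => rfl) (fun _ _ _ => rfl)

lemma deg_mono {a b : H →₀ ℕ} (h : a ≤ b) : deg a ≤ deg b := by
  obtain ⟨c, rfl⟩ := le_iff_exists_add.mp h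
  rw [deg_add]; omega

lemma deg_zero : deg (0 : H →₀ ℕ) = 0 := Finsupp.sum_zero_index

lemma deg_eq_zero {a : H →₀ ℕ} (h : deg a = 0) : a = 0 := by
  ext i
  by_cases hi : i ∈ a.support
  · unfold deg Finsupp.sum at h
    exact (Finset.sum_eq_zero_iff.mp h i hi)
  · simpa using hi

lemma deg_single (i : H) : deg (Finsupp.single i 1) = 1 :=
  Finsupp.sum_single_index rfl

lemma support_mono' {a b : H →₀ ℕ} (h : a ≤ b) : a.support ⊆ b.support := by
  intro x hx
  rw [Finsupp.mem_support_iff] at hx ⊢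
  have := h x
  omega

lemma coeff_cpow (f : MvPowerSeries H ℂ) (α : ℂ) (N : H →₀ ℕ) :
    MvPowerSeries.coeff N (cpow f α) =
      ∑ k ∈ Finset.range (deg N + 1), binomC α k * MvPowerSeries.coeff N ((f - 1) ^ k) := rfl

lemma binomC_zero (α : ℂ) : binomC α 0 = 1 := by simp [binomC]

lemma cpow_base_one (α : ℂ) : cpow (1 : MvPowerSeries H ℂ) α = 1 := by
  ext N
  rw [coeff_cpow, sub_self, Finset.sum_eq_single 0]
  · rw [binomC_zero, pow_zero, one_mul]
  · intro k _ hk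
    rw [zero_pow hk, map_zero, mul_zero]
  · intro h
    exact absurd (Finset.mem_range.mpr (Nat.succ_pos _)) h

lemma coeff_X_mul' (i : H) (f : MvPowerSeries H ℂ) (N : H →₀ ℕ) :
    MvPowerSeries.coeff N (MvPowerSeries.X i * f) =
      if Finsupp.single i 1 ≤ N then MvPowerSeries.coeff (N - Finsupp.single i 1) f else 0 := by
  rw [MvPowerSeries.X_def, MvPowerSeries.coeff_monomial_mul]
  split_ifs <;> simp

/-- agreement of coefficients up to total degree `d` -/
def Ddeg (d : ℕ) (f g : MvPowerSeries H ℂ) : Prop :=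
  ∀ N : H →₀ ℕ, deg N ≤ d → MvPowerSeries.coeff N f = MvPowerSeries.coeff N g

lemma Ddeg.refl (d : ℕ) (f : MvPowerSeries H ℂ) : Ddeg d f f := fun _ _ => rfl

lemma Ddeg.mul {d : ℕ} {f g f' g' : MvPowerSeries H ℂ} (hf : Ddeg d f f') (hg : Ddeg d g g') :
    Ddeg d (f * g) (f' * g') := by
  intro N hN
  rw [MvPowerSeries.coeff_mul, MvPowerSeries.coeff_mul]
  refine Finset.sum_congr rfl fun p hp => ?_
  rw [HasAntidiagonal.mem_antidiagonal] at hp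
  have h1 : p.1 ≤ N := hp ▸ self_le_add_right p.1 p.2
  have h2 : p.2 ≤ N := hp ▸ self_le_add_left p.2 p.1
  rw [hf p.1 ((deg_mono h1).trans hN), hg p.2 ((deg_mono h2).trans hN)]

lemma Ddeg.pow {d : ℕ} {f g : MvPowerSeries H ℂ} (h : Ddeg d f g) (k : ℕ) :
    Ddeg d (f ^ k) (g ^ k) := by
  induction k with
  | zero => simpa using Ddeg.refl d 1
  | succ k ih => rw [pow_succ, pow_succ]; exact ih.mul h

lemma Ddeg.prod {d : ℕ} {ι : Type*} {t : Finset ι} {f g : ι → MvPowerSeries H ℂ}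
    (h : ∀ j ∈ t, Ddeg d (f j) (g j)) :
    Ddeg d (∏ j ∈ t, f j) (∏ j ∈ t, g j) := by
  classical
  induction t using Finset.induction_on with
  | empty => simpa using Ddeg.refl d 1
  | insert _ _ ha ih =>
    rw [Finset.prod_insert ha, Finset.prod_insert ha]
    exact (h _ (Finset.mem_insert_self _ _)).mul
      (ih fun j hj => h j (Finset.mem_insert_of_mem hj))

lemma Ddeg.cpow {d : ℕ} {f g : MvPowerSeries H ℂ} (h : Ddeg d f g) (α : ℂ) :
    Ddeg d (cpow f α) (cpow g α) := by
  intro N hN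
  rw [coeff_cpow, coeff_cpow]
  refine Finset.sum_congr rfl fun k _ => ?_
  have hsub : Ddeg d (f - 1) (g - 1) := fun M hM => by
    rw [map_sub, map_sub, h M hM]
  rw [hsub.pow k N hN]



lemma coeff_projL (s : Finset H) (f : MvPowerSeries H ℂ) (N : H →₀ ℕ) :
    MvPowerSeries.coeff N (projL s f) =
      if N.support ⊆ s then MvPowerSeries.coeff N f else 0 := rfl

lemma coeff_projL_of_subset {s : Finset H} {N : H →₀ ℕ} (h : N.support ⊆ s)
    (f : MvPowerSeries H ℂ) :
    MvPowerSeries.coeff N (projL s f) = MvPowerSeries.coeff N f := by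
  rw [coeff_projL, if_pos h]

lemma projL_one (s : Finset H) : projL s (1 : MvPowerSeries H ℂ) = 1 := by
  ext N
  rw [coeff_projL]
  split_ifs with h
  · rfl
  · rw [MvPowerSeries.coeff_one, if_neg]
    rintro rfl
    exact h (by simp)

lemma projL_add (s : Finset H) (f g : MvPowerSeries H ℂ) :
    projL s (f + g) = projL s f + projL s g := by
  ext N
  rw [map_add, coeff_projL, coeff_projL, coeff_projL, map_add]
  split_ifs <;> simp

lemma projL_sub (s : Finset H) (f g : MvPowerSeries H ℂ) :
    projL s (f - g) = projL s f - projL s g := by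
  ext N
  rw [map_sub, coeff_projL, coeff_projL, coeff_projL, map_sub]
  split_ifs <;> simp

lemma projL_mul (s : Finset H) (f g : MvPowerSeries H ℂ) :
    projL s (f * g) = projL s f * projL s g := by
  ext N
  rw [coeff_projL, MvPowerSeries.coeff_mul, MvPowerSeries.coeff_mul]
  split_ifs with h
  · refine Finset.sum_congr rfl fun p hp => ?_
    rw [HasAntidiagonal.mem_antidiagonal] at hp
    have h1 : p.1.support ⊆ s := (support_mono' (hp ▸ self_le_add_right p.1 p.2)).trans h
    have h2 : p.2.support ⊆ s := (support_mono' (hp ▸ self_le_add_left p.2 p.1)).trans h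
    rw [coeff_projL_of_subset h1, coeff_projL_of_subset h2]
  · refine (Finset.sum_eq_zero fun p hp => ?_).symm
    rw [HasAntidiagonal.mem_antidiagonal] at hp
    by_cases h1 : p.1.support ⊆ s
    · by_cases h2 : p.2.support ⊆ s
      · exact absurd (hp ▸ (Finsupp.support_add.trans (Finset.union_subset h1 h2))) h
      · rw [coeff_projL s g p.2, if_neg h2, mul_zero]
    · rw [coeff_projL s f p.1, if_neg h1, zero_mul]

lemma projL_pow (s : Finset H) (f : MvPowerSeries H ℂ) (k : ℕ) :
    projL s (f ^ k) = projL s f ^ k := by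
  induction k with
  | zero => simpa using projL_one s
  | succ k ih => rw [pow_succ, pow_succ, projL_mul, ih]

lemma projL_prod (s : Finset H) {ι : Type*} (t : Finset ι) (f : ι → MvPowerSeries H ℂ) :
    projL s (∏ j ∈ t, f j) = ∏ j ∈ t, projL s (f j) := by
  classical
  induction t using Finset.induction_on with
  | empty => simpa using projL_one s
  | insert _ _ ha ih =>
    rw [Finset.prod_insert ha, Finset.prod_insert ha, projL_mul, ih]

lemma projL_X_mem {s : Finset H} {i : H} (h : i ∈ s) :
    projL s (MvPowerSeries.X i : MvPowerSeries H ℂ) = MvPowerSeries.X i := by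
  ext N
  rw [coeff_projL]
  split_ifs with h'
  · rfl
  · rw [MvPowerSeries.coeff_X, if_neg]
    rintro rfl
    apply h'
    rw [Finsupp.support_single_ne_zero _ one_ne_zero]
    simpa using h

lemma projL_X_notMem {s : Finset H} {i : H} (h : i ∉ s) :
    projL s (MvPowerSeries.X i : MvPowerSeries H ℂ) = 0 := by
  ext N
  rw [coeff_projL, map_zero]
  split_ifs with h'
  · rw [MvPowerSeries.coeff_X, if_neg]
    rintro rfl
    apply h
    apply h'
    rw [Finsupp.support_single_ne_zero _ one_ne_zero]
    simp
  · rfl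

lemma cpow_projL (s : Finset H) (f : MvPowerSeries H ℂ) (α : ℂ) :
    projL s (cpow f α) = cpow (projL s f) α := by
  ext N
  rw [coeff_projL, coeff_cpow]
  have key : ∀ k : ℕ, (projL s f - 1) ^ k = projL s ((f - 1) ^ k) := by
    intro k
    rw [projL_pow, projL_sub, projL_one]
  rw [coeff_cpow]
  split_ifs with h
  · refine Finset.sum_congr rfl fun k _ => ?_
    rw [key k, coeff_projL_of_subset h]
  · refine (Finset.sum_eq_zero fun k _ => ?_).symm
    rw [key k, coeff_projL, if_neg h, mul_zero]

lemma projL_projL {s s' : Finset H} (h : s ⊆ s') (f : MvPowerSeries H ℂ) :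
    projL s (projL s' f) = projL s f := by
  ext N
  by_cases h' : N.support ⊆ s
  · rw [coeff_projL_of_subset h', coeff_projL_of_subset (h'.trans h),
      coeff_projL_of_subset h']
  · rw [coeff_projL s (projL s' f) N, if_neg h', coeff_projL s f N, if_neg h']



noncomputable def Fmap (G : H → H → ℂ) (s : Finset H) (R : H → MvPowerSeries H ℂ) :
    H → MvPowerSeries H ℂ :=
  fun i => if i ∈ s then 1 - MvPowerSeries.X i * ∏ j ∈ s, cpow (R j) (G i j) else 1

lemma coeff_zero_Fmap (G : H → H → ℂ) (s : Finset H) (R : H → MvPowerSeries H ℂ) (i : H) :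
    MvPowerSeries.coeff 0 (Fmap G s R i) = 1 := by
  unfold Fmap
  split_ifs with hi
  · rw [map_sub, coeff_X_mul', if_neg, sub_zero, MvPowerSeries.coeff_one, if_pos rfl]
    intro hle
    have := hle i
    simp at this
  · rw [MvPowerSeries.coeff_one, if_pos rfl]

lemma Fmap_contract (G : H → H → ℂ) (s : Finset H) {d : ℕ} {R R' : H → MvPowerSeries H ℂ}
    (h : ∀ j, Ddeg d (R j) (R' j)) (i : H) :
    Ddeg (d + 1) (Fmap G s R i) (Fmap G s R' i) := by
  intro N hN
  unfold Fmap
  split_ifs with hi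
  · rw [map_sub, map_sub, coeff_X_mul', coeff_X_mul']
    congr 1
    split_ifs with hle
    · have hdeg : deg (N - Finsupp.single i 1) ≤ d := by
        have h1 : (N - Finsupp.single i 1) + Finsupp.single i 1 = N := tsub_add_cancel_of_le hle
        have h2 := deg_add (N - Finsupp.single i 1) (Finsupp.single i 1)
        rw [h1, deg_single] at h2
        omega
      exact Ddeg.prod (fun j _ => (h j).cpow (G i j)) _ hdeg
    · rfl
  · rfl

noncomputable def Qiter (G : H → H → ℂ) (s : Finset H) : ℕ → H → MvPowerSeries H ℂ
  | 0 => fun _ => 1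
  | d + 1 => Fmap G s (Qiter G s d)

/-- the solution of the finite `Q`-system on `s` -/
noncomputable def Qfin (G : H → H → ℂ) (s : Finset H) (i : H) : MvPowerSeries H ℂ :=
  fun N => Qiter G s (deg N) i N

lemma Qiter_stab (G : H → H → ℂ) (s : Finset H) :
    ∀ d, ∀ i, Ddeg d (Qiter G s d i) (Qiter G s (d + 1) i) := by
  intro d
  induction d with
  | zero =>
    intro i N hN
    have hN0 : N = 0 := deg_eq_zero (Nat.le_zero.mp hN)
    subst hN0
    show MvPowerSeries.coeff 0 (1 : MvPowerSeries H ℂ)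
      = MvPowerSeries.coeff 0 (Fmap G s (Qiter G s 0) i)
    rw [coeff_zero_Fmap, MvPowerSeries.coeff_one, if_pos rfl]
  | succ d ih =>
    intro i
    exact Fmap_contract G s (fun j => ih j) i

lemma coeff_Qfin (G : H → H → ℂ) (s : Finset H) (i : H) {N : H →₀ ℕ} {e : ℕ}
    (h : deg N ≤ e) :
    MvPowerSeries.coeff N (Qfin G s i) = MvPowerSeries.coeff N (Qiter G s e i) := by
  induction e, h using Nat.le_induction with
  | base => rfl
  | succ e he ih => rw [ih, Qiter_stab G s e i N (he.trans (Nat.le_refl e))]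

lemma coeff_zero_Qfin (G : H → H → ℂ) (s : Finset H) (i : H) :
    MvPowerSeries.coeff 0 (Qfin G s i) = 1 := by
  rw [coeff_Qfin G s i (e := 0) (by rw [deg_zero])]
  show MvPowerSeries.coeff 0 (1 : MvPowerSeries H ℂ) = 1
  rw [MvPowerSeries.coeff_one, if_pos rfl]

lemma Qfin_fixed (G : H → H → ℂ) (s : Finset H) (i : H) :
    Fmap G s (Qfin G s) i = Qfin G s i := by
  ext N
  have hd : ∀ j, Ddeg (deg N) (Qfin G s j) (Qiter G s (deg N) j) :=
    fun j M hM => coeff_Qfin G s j hM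
  calc MvPowerSeries.coeff N (Fmap G s (Qfin G s) i)
      = MvPowerSeries.coeff N (Fmap G s (Qiter G s (deg N)) i) :=
        Fmap_contract G s hd i N (Nat.le_succ _)
    _ = MvPowerSeries.coeff N (Qiter G s (deg N + 1) i) := rfl
    _ = MvPowerSeries.coeff N (Qfin G s i) :=
        (coeff_Qfin G s i (Nat.le_succ _)).symm

lemma Qfin_notMem (G : H → H → ℂ) {s : Finset H} {i : H} (h : i ∉ s) :
    Qfin G s i = 1 := by
  conv_lhs => rw [← Qfin_fixed G s i]
  rw [Fmap, if_neg h]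

lemma Qfin_eq (G : H → H → ℂ) {s : Finset H} {i : H} (h : i ∈ s) :
    Qfin G s i = 1 - MvPowerSeries.X i * ∏ j ∈ s, cpow (Qfin G s j) (G i j) := by
  conv_lhs => rw [← Qfin_fixed G s i]
  rw [Fmap, if_pos h]

lemma Qfin_add_eq (G : H → H → ℂ) (s : Finset H) {i : H} (h : i ∈ s) :
    Qfin G s i + MvPowerSeries.X i * ∏ j ∈ s, cpow (Qfin G s j) (G i j) = 1 := by
  rw [Qfin_eq G h]; ring

lemma Qfin_unique (G : H → H → ℂ) (s : Finset H) (R : H → MvPowerSeries H ℂ)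
    (h1 : ∀ i ∉ s, R i = 1)
    (h2 : ∀ i ∈ s, R i + MvPowerSeries.X i * ∏ j ∈ s, cpow (R j) (G i j) = 1) :
    ∀ i, R i = Qfin G s i := by
  have hfix : ∀ i, Fmap G s R i = R i := by
    intro i
    by_cases hi : i ∈ s
    · rw [Fmap, if_pos hi]
      exact (eq_sub_of_add_eq (h2 i hi)).symm
    · rw [Fmap, if_neg hi]
      exact (h1 i hi).symm
  have key : ∀ d, ∀ i, Ddeg d (R i) (Qfin G s i) := by
    intro d
    induction d with
    | zero =>
      intro i N hN
      have hN0 : N = 0 := deg_eq_zero (Nat.le_zero.mp hN)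
      subst hN0
      rw [← hfix i, coeff_zero_Fmap, coeff_zero_Qfin]
    | succ d ih =>
      intro i N hN
      rw [← hfix i, ← Qfin_fixed G s i]
      exact Fmap_contract G s ih i N hN
  intro i
  ext N
  exact key (deg N) i N (Nat.le_refl _)



lemma prod_cpow_subset {s t : Finset H} (hst : s ⊆ t) (Qf : H → MvPowerSeries H ℂ)
    (c : H → ℂ) (h1 : ∀ j ∈ t, j ∉ s → Qf j = 1) :
    ∏ j ∈ t, cpow (Qf j) (c j) = ∏ j ∈ s, cpow (Qf j) (c j) :=
  (Finset.prod_subset hst (fun j hj hjs => by rw [h1 j hj hjs, cpow_base_one])).symm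

lemma projL_Qfin (G : H → H → ℂ) {s s' : Finset H} (h : s ⊆ s') (i : H) :
    projL s (Qfin G s' i) = Qfin G s i := by
  have aux : ∀ j, j ∉ s → projL s (Qfin G s' j) = 1 := by
    intro j hj
    by_cases hj' : j ∈ s'
    · rw [Qfin_eq G hj', projL_sub, projL_one, projL_mul, projL_X_notMem hj, zero_mul,
        sub_zero]
    · rw [Qfin_notMem G hj', projL_one]
  refine Qfin_unique G s _ (fun j hj => aux j hj) ?_ i
  intro j hj
  have h2 := congrArg (projL s) (Qfin_add_eq G s' (h hj))
  rw [projL_add, projL_mul, projL_X_mem hj, projL_one, projL_prod] at h2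
  calc projL s (Qfin G s' j) +
        MvPowerSeries.X j * ∏ k ∈ s, cpow (projL s (Qfin G s' k)) (G j k)
      = projL s (Qfin G s' j) +
        MvPowerSeries.X j * ∏ k ∈ s', projL s (cpow (Qfin G s' k) (G j k)) := by
        congr 1
        congr 1
        rw [Finset.prod_congr rfl (fun k _ => cpow_projL s (Qfin G s' k) (G j k))]
        exact (prod_cpow_subset h _ _ (fun k _ hk => aux k hk)).symm
    _ = 1 := h2

lemma coeff_Qfin_of_not_subset (G : H → H → ℂ) {s : Finset H} {N : H →₀ ℕ}
    (h : ¬ N.support ⊆ s) (i : H) :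
    MvPowerSeries.coeff N (Qfin G s i) = 0 := by
  rw [← projL_Qfin G (Finset.Subset.refl s) i, coeff_projL, if_neg h]

/-- the solution of the infinite `Q`-system -/
noncomputable def Qinf (G : H → H → ℂ) (i : H) : MvPowerSeries H ℂ :=
  fun N => Qfin G N.support i N

lemma Qinf_apply (G : H → H → ℂ) (i : H) (N : H →₀ ℕ) :
    Qinf G i N = MvPowerSeries.coeff N (Qfin G N.support i) := rfl

lemma coeff_Qinf (G : H → H → ℂ) {N : H →₀ ℕ} {s : Finset H} (h : N.support ⊆ s) (i : H) :
    MvPowerSeries.coeff N (Qinf G i) = MvPowerSeries.coeff N (Qfin G s i) := by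
  rw [MvPowerSeries.coeff_apply, Qinf_apply, ← projL_Qfin G h i,
    coeff_projL_of_subset (Finset.Subset.refl _)]

lemma projL_Qinf (G : H → H → ℂ) (s : Finset H) (i : H) :
    projL s (Qinf G i) = Qfin G s i := by
  ext N
  rw [coeff_projL]
  split_ifs with h
  · exact coeff_Qinf G h i
  · exact (coeff_Qfin_of_not_subset G h i).symm

lemma projL_prod_cpow_Qfin (G : H → H → ℂ) {s s' : Finset H} (h : s ⊆ s') (c : H → ℂ) :
    projL s (∏ j ∈ s', cpow (Qfin G s' j) (c j)) = ∏ j ∈ s, cpow (Qfin G s j) (c j) := by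
  rw [projL_prod, Finset.prod_congr rfl
    (fun j _ => by rw [cpow_projL, projL_Qfin G h j])]
  exact prod_cpow_subset h _ _ (fun j _ hj => Qfin_notMem G hj)

noncomputable def Pinf (G : H → H → ℂ) (i : H) : MvPowerSeries H ℂ :=
  fun N => MvPowerSeries.coeff N
    (∏ j ∈ insert i N.support, cpow (Qfin G (insert i N.support) j) (G i j))

lemma Pinf_apply (G : H → H → ℂ) (i : H) (N : H →₀ ℕ) :
    Pinf G i N = MvPowerSeries.coeff N
      (∏ j ∈ insert i N.support, cpow (Qfin G (insert i N.support) j) (G i j)) := rfl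

lemma coeff_Pinf (G : H → H → ℂ) (i : H) {N : H →₀ ℕ} {s : Finset H}
    (h : insert i N.support ⊆ s) :
    MvPowerSeries.coeff N (Pinf G i) =
      MvPowerSeries.coeff N (∏ j ∈ s, cpow (Qfin G s j) (G i j)) := by
  rw [MvPowerSeries.coeff_apply, Pinf_apply, ← projL_prod_cpow_Qfin G h (G i),
    coeff_projL_of_subset (Finset.subset_insert i N.support)]

lemma hasProd_Qinf (G : H → H → ℂ) (i : H) :
    HasProdPS (fun j => cpow (Qinf G j) (G i j)) (Pinf G i) := by
  intro N
  refine ⟨insert i N.support, fun t ht => ?_⟩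
  have hNs : N.support ⊆ insert i N.support := Finset.subset_insert i N.support
  calc MvPowerSeries.coeff N (∏ j ∈ t, cpow (Qinf G j) (G i j))
      = MvPowerSeries.coeff N
          (projL (insert i N.support) (∏ j ∈ t, cpow (Qinf G j) (G i j))) :=
        (coeff_projL_of_subset hNs _).symm
    _ = MvPowerSeries.coeff N
          (∏ j ∈ t, cpow (Qfin G (insert i N.support) j) (G i j)) := by
        rw [projL_prod, Finset.prod_congr rfl (fun j _ => by
          rw [cpow_projL, projL_Qinf G (insert i N.support) j])]
    _ = MvPowerSeries.coeff N
          (∏ j ∈ insert i N.support, cpow (Qfin G (insert i N.support) j) (G i j)) := by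
        rw [prod_cpow_subset ht _ _ (fun j _ hj => Qfin_notMem G hj)]
    _ = MvPowerSeries.coeff N (Pinf G i) := by
        conv_rhs => rw [MvPowerSeries.coeff_apply, Pinf_apply]

lemma Qinf_eq (G : H → H → ℂ) (i : H) :
    Qinf G i + MvPowerSeries.X i * Pinf G i = 1 := by
  ext N
  have hmem : i ∈ insert i N.support := Finset.mem_insert_self i N.support
  have h1 : MvPowerSeries.coeff N (Qinf G i) =
      MvPowerSeries.coeff N (Qfin G (insert i N.support) i) :=
    coeff_Qinf G (Finset.subset_insert i N.support) i
  have h2 : MvPowerSeries.coeff N (MvPowerSeries.X i * Pinf G i) =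
      MvPowerSeries.coeff N (MvPowerSeries.X i *
        ∏ j ∈ insert i N.support, cpow (Qfin G (insert i N.support) j) (G i j)) := by
    rw [coeff_X_mul', coeff_X_mul']
    split_ifs with hle
    · apply coeff_Pinf G i
      apply Finset.insert_subset hmem
      exact (Finsupp.support_tsub).trans (Finset.subset_insert i N.support)
    · rfl
  rw [map_add, h1, h2, ← map_add, Qfin_add_eq G (insert i N.support) hmem]

lemma constantCoeff_Qinf (G : H → H → ℂ) (i : H) :
    MvPowerSeries.constantCoeff (Qinf G i) = 1 := by
  rw [← MvPowerSeries.coeff_zero_eq_constantCoeff_apply,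
    coeff_Qinf G (s := ∅) (by simp) i, coeff_zero_Qfin]

lemma Qinf_solves (G : H → H → ℂ) : InfStdSys G (Qinf G) :=
  ⟨constantCoeff_Qinf G, fun i => ⟨Pinf G i, hasProd_Qinf G i, Qinf_eq G i⟩⟩



lemma sol_proj (G : H → H → ℂ) {Q : H → MvPowerSeries H ℂ} (hQ : InfStdSys G Q)
    (s : Finset H) : ∀ i, projL s (Q i) = Qfin G s i := by
  have aux : ∀ j, j ∉ s → projL s (Q j) = 1 := by
    intro j hj
    obtain ⟨P, _, heq⟩ := hQ.2 j
    have hQj : Q j = 1 - MvPowerSeries.X j * P := by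
      rw [eq_sub_iff_add_eq]; exact heq
    rw [hQj, projL_sub, projL_one, projL_mul, projL_X_notMem hj, zero_mul, sub_zero]
  refine Qfin_unique G s _ (fun j hj => aux j hj) ?_
  intro i hi
  obtain ⟨P, hP, heq⟩ := hQ.2 i
  have hPs : projL s P = ∏ j ∈ s, cpow (projL s (Q j)) (G i j) := by
    ext N
    by_cases h : N.support ⊆ s
    · obtain ⟨s₁, hs₁⟩ := hP N
      calc MvPowerSeries.coeff N (projL s P)
          = MvPowerSeries.coeff N P := coeff_projL_of_subset h P
        _ = MvPowerSeries.coeff N (∏ j ∈ s₁ ∪ s, cpow (Q j) (G i j)) :=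
            (hs₁ _ Finset.subset_union_left).symm
        _ = MvPowerSeries.coeff N
            (projL s (∏ j ∈ s₁ ∪ s, cpow (Q j) (G i j))) :=
            (coeff_projL_of_subset h _).symm
        _ = MvPowerSeries.coeff N
            (∏ j ∈ s₁ ∪ s, cpow (projL s (Q j)) (G i j)) := by
            rw [projL_prod, Finset.prod_congr rfl
              (fun j _ => cpow_projL s (Q j) (G i j))]
        _ = MvPowerSeries.coeff N (∏ j ∈ s, cpow (projL s (Q j)) (G i j)) := by
            rw [prod_cpow_subset Finset.subset_union_right _ _ (fun j _ hj => aux j hj)]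
    · have hR : (∏ j ∈ s, cpow (projL s (Q j)) (G i j)) =
          projL s (∏ j ∈ s, cpow (Q j) (G i j)) := by
        rw [projL_prod]
        exact Finset.prod_congr rfl fun j _ => (cpow_projL _ _ _).symm
      rw [hR, coeff_projL, if_neg h, coeff_projL, if_neg h]
  have h2 := congrArg (projL s) heq
  rw [projL_add, projL_mul, projL_X_mem hi, projL_one, hPs] at h2
  exact h2

lemma sol_unique (G : H → H → ℂ) {Q : H → MvPowerSeries H ℂ} (hQ : InfStdSys G Q) :
    Q = Qinf G := by
  funext i
  ext N
  rw [← coeff_projL_of_subset (Finset.Subset.refl N.support) (Q i),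
    sol_proj G hQ N.support i, ← coeff_Qinf G (Finset.Subset.refl N.support) i]

lemma exists_L {HL : ℕ → Finset H} (hmono : Monotone HL)
    (hcover : ∀ i : H, ∃ L, i ∈ HL L) (u : Finset H) : ∃ L, u ⊆ HL L := by
  classical
  induction u using Finset.induction_on with
  | empty => exact ⟨0, by simp⟩
  | @insert a u ha ih =>
    obtain ⟨L1, h1⟩ := ih
    obtain ⟨L2, h2⟩ := hcover a
    exact ⟨max L1 L2, Finset.insert_subset (hmono (le_max_right L1 L2) h2)
      (h1.trans (hmono (le_max_left L1 L2)))⟩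


end St10

/-- For a countably infinite index set `H` (with an exhausting
increasing sequence of finite subsets `H_L`) and any complex matrix `G`, the standard
infinite `Q`-system has a unique solution with unit constant terms; moreover, for a
family with unit constant terms, being a solution is characterized by the conditions on
the projections: `p_L(Q_i) = 1` for `i ∉ H_L`, and
`p_L(Q_i) + w_i ∏_{j∈H_L} p_L(Q_j)^{G_{ij}} = 1` for `i ∈ H_L`. -/
theorem statement10 {H : Type*} [Countable H] [Infinite H] [DecidableEq H]
    (HL : ℕ → Finset H) (hmono : Monotone HL) (hcover : ∀ i : H, ∃ L, i ∈ HL L)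
    (G : H → H → ℂ) :
    (∃! Q : H → MvPowerSeries H ℂ, InfStdSys G Q) ∧
    (∀ Q : H → MvPowerSeries H ℂ,
      (∀ i, MvPowerSeries.constantCoeff (Q i) = 1) →
      (InfStdSys G Q ↔
        ((∀ L, ∀ i ∉ HL L, projL (HL L) (Q i) = 1) ∧
         (∀ L, ∀ i ∈ HL L,
            projL (HL L) (Q i) +
              MvPowerSeries.X i * ∏ j ∈ HL L, cpow (projL (HL L) (Q j)) (G i j) = 1)))) := by
  classical
  constructor
  · exact ⟨St10.Qinf G, St10.Qinf_solves G, fun Q hQ => St10.sol_unique G hQ⟩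
  · intro Q h0
    constructor
    · intro hQ
      have hp := St10.sol_proj G hQ
      constructor
      · intro L i hi
        rw [hp (HL L) i]
        exact St10.Qfin_notMem G hi
      · intro L i hi
        rw [hp (HL L) i, Finset.prod_congr rfl (fun j _ => by rw [hp (HL L) j])]
        exact St10.Qfin_add_eq G (HL L) hi
    · rintro ⟨h1, h2⟩
      have hp : ∀ L i, projL (HL L) (Q i) = St10.Qfin G (HL L) i := by
        intro L
        exact St10.Qfin_unique G (HL L) _ (h1 L) (h2 L)
      have hQeq : Q = St10.Qinf G := by
        funext i
        ext N
        obtain ⟨L, hL⟩ := St10.exists_L hmono hcover N.support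
        rw [← St10.coeff_projL_of_subset hL (Q i), hp L i,
          ← St10.coeff_Qinf G hL i]
      rw [hQeq]
      exact St10.Qinf_solves G
end
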